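/- arXiv:1207.2864 — 7 statements merged into one kernel-verified Lean document; each statement's English description precedes it below -/
import Mathlib

section
/- Let A and B be invertible positive bounded linear operators on a complex Hilbert space H and let m > 0 be a real number such that A - B ≥ m·I. Then B⁻¹ - A⁻¹ ≥ (m / ((‖A‖ - m)·‖A‖))·I. -/
set_option maxHeartbeats 1000000
set_option synthInstance.maxHeartbeats 400000

section AuxLemmas

variable {H : Type*} [NormedAddCommGroup H] [InnerProductSpace ℂ H] [CompleteSpace H]

private lemma aux_smul_nonneg {t : ℝ} (ht : 0 ≤ t) {f : H →L[ℂ] H} (hf : 0 ≤ f) :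
    (0 : H →L[ℂ] H) ≤ t • f := by
  rw [ContinuousLinearMap.nonneg_iff_isPositive] at hf ⊢
  refine ⟨?_, fun x => ?_⟩
  · rw [← ContinuousLinearMap.isSelfAdjoint_iff_isSymmetric]
    show star (t • f) = t • f
    rw [star_smul, star_trivial, hf.1.isSelfAdjoint.star_eq]
  · have h0 := hf.2 x
    rw [ContinuousLinearMap.reApplyInnerSelf] at h0 ⊢
    rw [ContinuousLinearMap.smul_apply, RCLike.real_smul_eq_coe_smul (K := ℂ),
      inner_smul_left, RCLike.conj_ofReal, RCLike.re_ofReal_mul]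
    exact mul_nonneg ht h0

private lemma aux_smul_le {t : ℝ} (ht : 0 ≤ t) {x y : H →L[ℂ] H} (hxy : x ≤ y) :
    t • x ≤ t • y := by
  rw [← sub_nonneg, ← smul_sub]
  exact aux_smul_nonneg ht (sub_nonneg.2 hxy)

end AuxLemmas

/-- **Lemma 1 (Moslehian–Najafi).** If `A, B` are invertible positive operators on a complex
Hilbert space with `A - B ≥ m·I` for some `m > 0`, then
`B⁻¹ - A⁻¹ ≥ (m / ((‖A‖ - m)·‖A‖))·I`. -/
theorem inv_sub_inv_ge_of_sub_ge_smul_one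
    {H : Type*} [NormedAddCommGroup H] [InnerProductSpace ℂ H] [CompleteSpace H]
    (A B : H →L[ℂ] H) (hA : 0 ≤ A) (hB : 0 ≤ B) (hAu : IsUnit A) (hBu : IsUnit B)
    (m : ℝ) (hm : 0 < m) (h : m • (1 : H →L[ℂ] H) ≤ A - B) :
    (m / ((‖A‖ - m) * ‖A‖)) • (1 : H →L[ℂ] H) ≤ Ring.inverse B - Ring.inverse A := by
  rcases subsingleton_or_nontrivial (H →L[ℂ] H) with hs | hs
  · exact le_of_eq (Subsingleton.elim _ _)
  lift A to (H →L[ℂ] H)ˣ using hAu with Au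
  lift B to (H →L[ℂ] H)ˣ using hBu with Bu
  have hAsa : IsSelfAdjoint (↑Au : H →L[ℂ] H) := .of_nonneg hA
  have hA_le : (↑Au : H →L[ℂ] H) ≤ ‖(↑Au : H →L[ℂ] H)‖ • (1 : H →L[ℂ] H) := by
    have := IsSelfAdjoint.le_algebraMap_norm_self (a := (↑Au : H →L[ℂ] H))
    rwa [Algebra.algebraMap_eq_smul_one] at this
  have h1 : (↑Bu : H →L[ℂ] H) + m • (1 : H →L[ℂ] H) ≤ ↑Au := by
    have := add_le_add_left h (↑Bu : H →L[ℂ] H)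
    rwa [sub_add_cancel, add_comm] at this
  -- B ≤ (‖A‖ - m) • 1
  have hBle : (↑Bu : H →L[ℂ] H) ≤ (‖(↑Au : H →L[ℂ] H)‖ - m) • (1 : H →L[ℂ] H) := by
    have h2 : (↑Bu : H →L[ℂ] H) + m • (1 : H →L[ℂ] H) ≤ ‖(↑Au : H →L[ℂ] H)‖ • 1 :=
      h1.trans hA_le
    have := sub_le_sub_right h2 (m • (1 : H →L[ℂ] H))
    rwa [add_sub_cancel_right, ← sub_smul] at this
  -- 0 < ‖A‖ - m
  have hpos : 0 < ‖(↑Au : H →L[ℂ] H)‖ - m := by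
    by_contra hc
    push_neg at hc
    have hB0 : (↑Bu : H →L[ℂ] H) ≤ 0 := hBle.trans <| by
      rw [← neg_nonneg, ← neg_smul]
      exact aux_smul_nonneg (by linarith) zero_le_one
    exact Bu.isUnit.ne_zero (le_antisymm hB0 hB)
  have hApos : 0 < ‖(↑Au : H →L[ℂ] H)‖ := hm.trans (by linarith)
  set c : ℝ := (‖(↑Au : H →L[ℂ] H)‖ - m) / ‖(↑Au : H →L[ℂ] H)‖ with hc
  have hcpos : 0 < c := div_pos hpos hApos
  -- B ≤ c • A
  have hBcA : (↑Bu : H →L[ℂ] H) ≤ c • ↑Au := by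
    have key : (m / ‖(↑Au : H →L[ℂ] H)‖) • (↑Au : H →L[ℂ] H) ≤ m • (1 : H →L[ℂ] H) := by
      have := aux_smul_le (le_of_lt (div_pos hm hApos)) hA_le
      rwa [smul_smul, div_mul_cancel₀ m hApos.ne'] at this
    have h2 : (↑Bu : H →L[ℂ] H) + (m / ‖(↑Au : H →L[ℂ] H)‖) • (↑Au : H →L[ℂ] H) ≤ ↑Au :=
      le_trans (add_le_add_right key ↑Bu) h1
    have h3 := sub_le_sub_right h2 ((m / ‖(↑Au : H →L[ℂ] H)‖) • (↑Au : H →L[ℂ] H))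
    rw [add_sub_cancel_right] at h3
    calc (↑Bu : H →L[ℂ] H)
        ≤ ↑Au - (m / ‖(↑Au : H →L[ℂ] H)‖) • ↑Au := h3
      _ = c • ↑Au := by rw [hc, sub_div, div_self hApos.ne', sub_smul, one_smul]
  -- units for c • A and ‖A‖ • 1
  obtain ⟨Cu, hCu⟩ : IsUnit (c • (↑Au : H →L[ℂ] H)) := by
    rw [show c • (↑Au : H →L[ℂ] H) = algebraMap ℝ (H →L[ℂ] H) c * ↑Au from Algebra.smul_def ..]
    exact ((isUnit_iff_ne_zero.2 hcpos.ne').map (algebraMap ℝ (H →L[ℂ] H))).mul Au.isUnit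
  obtain ⟨Nu, hNu⟩ : IsUnit (‖(↑Au : H →L[ℂ] H)‖ • (1 : H →L[ℂ] H)) := by
    rw [show ‖(↑Au : H →L[ℂ] H)‖ • (1 : H →L[ℂ] H)
        = algebraMap ℝ (H →L[ℂ] H) ‖(↑Au : H →L[ℂ] H)‖ * 1 from Algebra.smul_def ..]
    exact ((isUnit_iff_ne_zero.2 hApos.ne').map (algebraMap ℝ (H →L[ℂ] H))).mul isUnit_one
  have hCinv : (↑Cu⁻¹ : H →L[ℂ] H) = c⁻¹ • (↑Au⁻¹ : H →L[ℂ] H) := by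
    apply Units.inv_eq_of_mul_eq_one_right
    rw [hCu, smul_mul_assoc, mul_smul_comm, smul_smul, mul_inv_cancel₀ hcpos.ne', one_smul]
    exact Au.mul_inv
  have hNinv : (↑Nu⁻¹ : H →L[ℂ] H) = ‖(↑Au : H →L[ℂ] H)‖⁻¹ • (1 : H →L[ℂ] H) := by
    apply Units.inv_eq_of_mul_eq_one_right
    rw [hNu, smul_mul_assoc, mul_smul_comm, smul_smul, mul_inv_cancel₀ hApos.ne', one_smul,
      one_mul]
  have hBC : (↑Cu⁻¹ : H →L[ℂ] H) ≤ ↑Bu⁻¹ :=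
    CStarAlgebra.inv_le_inv hB (by rw [hCu]; exact hBcA)
  have hAN : (↑Nu⁻¹ : H →L[ℂ] H) ≤ ↑Au⁻¹ :=
    CStarAlgebra.inv_le_inv hA (by rw [hNu]; exact hA_le)
  rw [Ring.inverse_unit, Ring.inverse_unit]
  have hcinv1 : (0:ℝ) ≤ c⁻¹ - 1 := by
    rw [sub_nonneg, hc, inv_div, le_div_iff₀ hpos]
    linarith
  calc (m / ((‖(↑Au : H →L[ℂ] H)‖ - m) * ‖(↑Au : H →L[ℂ] H)‖)) • (1 : H →L[ℂ] H)
      = (c⁻¹ - 1) • (‖(↑Au : H →L[ℂ] H)‖⁻¹ • (1 : H →L[ℂ] H)) := by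
        rw [smul_smul]
        congr 1
        rw [hc, inv_div]
        field_simp
        ring
    _ ≤ (c⁻¹ - 1) • (↑Au⁻¹ : H →L[ℂ] H) := aux_smul_le hcinv1 (hNinv ▸ hAN)
    _ = c⁻¹ • (↑Au⁻¹ : H →L[ℂ] H) - ↑Au⁻¹ := by rw [sub_smul, one_smul]
    _ ≤ (↑Bu⁻¹ : H →L[ℂ] H) - ↑Au⁻¹ := sub_le_sub_right (by rw [← hCinv]; exact hBC) _
end

section
/- Let A be a positive invertible bounded linear operator on a complex Hilbert space H and let m > 0 be a real number such that A - m·I is positive and invertible. Then (A - m·I)⁻¹ ≥ A⁻¹ + (m / ((‖A‖ - m)·‖A‖))·I. -/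
set_option maxHeartbeats 1000000 in
/-- If `A` is a positive invertible operator on a complex Hilbert space and `m > 0` is such that
`A - m·I` is positive and invertible, then
`(A - m·I)⁻¹ ≥ A⁻¹ + (m / ((‖A‖ - m)·‖A‖))·I`. -/
theorem inverse_sub_smul_one_ge
    {H : Type*} [NormedAddCommGroup H] [InnerProductSpace ℂ H] [CompleteSpace H]
    (A : H →L[ℂ] H) (hA : 0 ≤ A) (hAu : IsUnit A)
    (m : ℝ) (hm : 0 < m)
    (h1 : 0 ≤ A - m • (1 : H →L[ℂ] H)) (h2 : IsUnit (A - m • (1 : H →L[ℂ] H))) :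
    Ring.inverse A + (m / ((‖A‖ - m) * ‖A‖)) • (1 : H →L[ℂ] H) ≤
      Ring.inverse (A - m • (1 : H →L[ℂ] H)) := by
  set c : ℝ := m / ((‖A‖ - m) * ‖A‖) with hc
  have hAsa : IsSelfAdjoint A := .of_nonneg hA
  have hBsa : IsSelfAdjoint (A - m • (1 : H →L[ℂ] H)) := .of_nonneg h1
  -- A - m•1 as cfc of A
  have hcfcB : cfc (fun x : ℝ => x - m) A = A - m • (1 : H →L[ℂ] H) := by
    have h : (fun x : ℝ => x - m) = fun x : ℝ => id x + (-m) := by ext x; simp [sub_eq_add_neg]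
    rw [h, cfc_add_const (-m) id A (by fun_prop) hAsa, cfc_id ℝ A hAsa,
      Algebra.algebraMap_eq_smul_one, neg_smul, ← sub_eq_add_neg]
  -- every spectrum point is > m
  have hspec : ∀ x ∈ spectrum ℝ A, m < x := by
    intro x hx
    have hxm : x - m ∈ spectrum ℝ (A - m • (1 : H →L[ℂ] H)) := by
      rw [← hcfcB, cfc_map_spectrum (f := fun x : ℝ => x - m) (a := A) hAsa (by fun_prop)]
      exact ⟨x, hx, rfl⟩
    have h0 : (0:ℝ) ≤ x - m := spectrum_nonneg_of_nonneg h1 hxm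
    have hne : x - m ≠ 0 := by
      intro h
      exact spectrum.zero_notMem ℝ h2 (h ▸ hxm)
    have := lt_of_le_of_ne h0 (Ne.symm hne)
    linarith
  -- spectrum points bounded by ‖A‖
  have hspec' : ∀ x ∈ spectrum ℝ A, x ≤ ‖A‖ :=
    le_algebraMap_iff_spectrum_le hAsa |>.mp hAsa.le_algebraMap_norm_self
  -- continuity facts
  have hcont1 : ContinuousOn (fun x : ℝ => x⁻¹) (spectrum ℝ A) := by
    apply ContinuousOn.inv₀ continuousOn_id
    intro x hx; exact ne_of_gt (hm.trans (hspec x hx))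
  have hcont2 : ContinuousOn (fun x : ℝ => (x - m)⁻¹) (spectrum ℝ A) := by
    apply ContinuousOn.inv₀ (by fun_prop)
    intro x hx; exact ne_of_gt (by linarith [hspec x hx])
  have himg : ContinuousOn (fun x : ℝ => x⁻¹) ((fun x : ℝ => x - m) '' spectrum ℝ A) := by
    apply ContinuousOn.inv₀ continuousOn_id
    rintro y ⟨x, hx, rfl⟩
    exact ne_of_gt (by simp only [id_eq]; linarith [hspec x hx])
  -- Ring.inverse A as cfc
  have e1 : Ring.inverse A = cfc (fun x : ℝ => x⁻¹) A := by
    have h := cfc_inv_id (R := ℝ) hAu.unit (by rw [hAu.unit_spec]; exact hAsa)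
    rw [hAu.unit_spec] at h
    rw [h]
    conv_lhs => rw [← hAu.unit_spec]
    rw [Ring.inverse_unit]
  -- Ring.inverse (A - m•1) as cfc
  have e2 : Ring.inverse (A - m • (1 : H →L[ℂ] H)) = cfc (fun x : ℝ => (x - m)⁻¹) A := by
    have hcomp := cfc_comp' (fun x : ℝ => x⁻¹) (fun x : ℝ => x - m) A himg (by fun_prop) hAsa
    rw [hcfcB] at hcomp
    have h := cfc_inv_id (R := ℝ) h2.unit (by rw [h2.unit_spec]; exact hBsa)
    rw [h2.unit_spec] at h
    rw [hcomp, h]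
    conv_lhs => rw [← h2.unit_spec]
    rw [Ring.inverse_unit]
  -- combine the left-hand side into one cfc
  have e3 : Ring.inverse A + c • (1 : H →L[ℂ] H) = cfc (fun x : ℝ => x⁻¹ + c) A := by
    rw [cfc_add_const c (fun x : ℝ => x⁻¹) A hcont1 hAsa, ← e1,
      Algebra.algebraMap_eq_smul_one]
  rw [e3, e2]
  apply cfc_mono _ (by fun_prop) hcont2
  intro x hx
  have hxm : m < x := hspec x hx
  have hxA : x ≤ ‖A‖ := hspec' x hx
  have hAm : 0 < ‖A‖ - m := by linarith
  have hA0 : 0 < ‖A‖ := by linarith [hm.trans hxm]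
  have hxm0 : 0 < x - m := by linarith
  have hx0 : 0 < x := by linarith
  have key : c ≤ m / ((x - m) * x) := by
    rw [hc]
    gcongr
  have e : (x - m)⁻¹ - x⁻¹ = m / ((x - m) * x) := by
    field_simp
    try ring
  linarith
end

section
/- Let A and B be positive bounded linear operators on a complex Hilbert space H, let m > 0 be a real number with A - B ≥ m·I, and let λ > 0. Then A(λ·I + A)⁻¹ - B(λ·I + B)⁻¹ ≥ (λm / ((‖A‖ + λ - m)·(‖A‖ + λ)))·I. -/
set_option maxHeartbeats 2000000
set_option synthInstance.maxHeartbeats 200000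


/-- If `A, B` are positive operators on a complex Hilbert space with `A - B ≥ m·I` for some
`m > 0`, then for every `λ > 0`,
`A(λ·I + A)⁻¹ - B(λ·I + B)⁻¹ ≥ (λm / ((‖A‖ + λ - m)·(‖A‖ + λ)))·I`. -/
theorem resolvent_expr_sub_ge
    {H : Type*} [NormedAddCommGroup H] [InnerProductSpace ℂ H] [CompleteSpace H]
    (A B : H →L[ℂ] H) (hA : 0 ≤ A) (hB : 0 ≤ B)
    (m : ℝ) (hm : 0 < m) (h : m • (1 : H →L[ℂ] H) ≤ A - B)
    (l : ℝ) (hl : 0 < l) :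
    (l * m / ((‖A‖ + l - m) * (‖A‖ + l))) • (1 : H →L[ℂ] H) ≤
      A * Ring.inverse (l • (1 : H →L[ℂ] H) + A) -
        B * Ring.inverse (l • (1 : H →L[ℂ] H) + B) := by
  obtain hH | hH := subsingleton_or_nontrivial H
  · have : Subsingleton (H →L[ℂ] H) :=
      ⟨fun f g => ContinuousLinearMap.ext fun x => Subsingleton.elim _ _⟩
    exact le_of_eq (Subsingleton.elim _ _)
  have hAsa : IsSelfAdjoint A := .of_nonneg hA
  have hBsa : IsSelfAdjoint B := .of_nonneg hB
  -- nonnegativity of real scalar multiples of `1`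
  have smul_one_nonneg : ∀ r : ℝ, 0 ≤ r → 0 ≤ (r • (1 : H →L[ℂ] H)) := by
    intro r hr
    have h1 := star_mul_self_nonneg (Real.sqrt r • (1 : H →L[ℂ] H))
    simpa [star_smul, smul_smul, Real.mul_self_sqrt hr] using h1
  -- multiplication by a nonnegative real scalar is monotone
  have smul_pos : ∀ r : ℝ, 0 ≤ r → ∀ x : H →L[ℂ] H, 0 ≤ x → 0 ≤ r • x := by
    intro r hr x hx
    have h1 : r • x = (Real.sqrt r • (1 : H →L[ℂ] H)) * x * (Real.sqrt r • 1) := by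
      simp [smul_mul_assoc, mul_smul_comm, smul_smul, Real.mul_self_sqrt hr, mul_comm]
    rw [h1]
    exact conjugate_nonneg_of_nonneg hx (smul_one_nonneg _ (Real.sqrt_nonneg r))
  have smul_mono : ∀ r : ℝ, 0 ≤ r → ∀ x y : H →L[ℂ] H, x ≤ y → r • x ≤ r • y := by
    intro r hr x y hxy
    rw [← sub_nonneg, ← smul_sub]
    exact smul_pos r hr _ (sub_nonneg.mpr hxy)
  -- units
  have hunit : ∀ c : ℝ, 0 < c → ∀ T : H →L[ℂ] H, 0 ≤ T → IsUnit (c • (1 : H →L[ℂ] H) + T) := by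
    intro c hc T hT
    have hmul : (c • (1 : H →L[ℂ] H)) * (c⁻¹ • (1 : H →L[ℂ] H)) = 1 := by
      rw [smul_mul_assoc, one_mul, smul_smul, mul_inv_cancel₀ hc.ne', one_smul]
    have hmul' : (c⁻¹ • (1 : H →L[ℂ] H)) * (c • (1 : H →L[ℂ] H)) = 1 := by
      rw [smul_mul_assoc, one_mul, smul_smul, inv_mul_cancel₀ hc.ne', one_smul]
    exact CStarAlgebra.isUnit_of_le (c • (1 : H →L[ℂ] H)) (le_add_of_nonneg_right hT)
      (IsUnit.isStrictlyPositive (⟨⟨c • (1 : H →L[ℂ] H), c⁻¹ • 1, hmul, hmul'⟩, rfl⟩ : IsUnit (c • (1 : H →L[ℂ] H)))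
        (smul_one_nonneg c hc.le))
  have hu : IsUnit (l • (1 : H →L[ℂ] H) + A) := hunit l hl A hA
  have hv : IsUnit (l • (1 : H →L[ℂ] H) + B) := hunit l hl B hB
  have hw : IsUnit ((l + m) • (1 : H →L[ℂ] H) + B) := hunit (l + m) (by positivity) B hB
  set U := hu.unit with hU
  set V := hv.unit with hV
  set W := hw.unit with hW
  have hUs : (↑U : H →L[ℂ] H) = l • 1 + A := hu.unit_spec
  have hVs : (↑V : H →L[ℂ] H) = l • 1 + B := hv.unit_spec
  have hWs : (↑W : H →L[ℂ] H) = (l + m) • 1 + B := hw.unit_spec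
  -- scalar facts
  have hmA : m • (1 : H →L[ℂ] H) ≤ A := h.trans (sub_le_self A hB)
  have hmnorm : m ≤ ‖A‖ := by
    have h1 := CStarAlgebra.norm_le_norm_of_nonneg_of_le (smul_one_nonneg m hm.le) hmA
    rwa [norm_smul, norm_one, mul_one, Real.norm_of_nonneg hm.le] at h1
  set c : ℝ := ‖A‖ + l - m with hc
  set d : ℝ := ‖A‖ + l with hd
  have hcpos : 0 < c := by simp only [hc]; linarith
  have hdpos : 0 < d := by simp only [hd]; positivity
  -- norm bounds
  have hAle : A ≤ ‖A‖ • 1 := by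
    simpa [Algebra.algebraMap_eq_smul_one] using hAsa.le_algebraMap_norm_self
  have hBmA : m • (1 : H →L[ℂ] H) + B ≤ A := le_sub_iff_add_le.mp h
  have hBle : B ≤ (‖A‖ - m) • 1 := by
    have h1 : B ≤ A - m • 1 := le_sub_iff_add_le'.mpr hBmA
    refine h1.trans ?_
    rw [sub_smul]
    exact sub_le_sub_right hAle _
  have hBnorm : ‖B‖ ≤ ‖A‖ - m := by
    have h1 := CStarAlgebra.norm_le_norm_of_nonneg_of_le hB hBle
    rwa [norm_smul, norm_one, mul_one, Real.norm_of_nonneg (by linarith)] at h1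
  -- the product V * W via cfc
  have e1 : cfc (fun t : ℝ => l + t) B = l • 1 + B := by
    rw [cfc_const_add l (fun t : ℝ => t) B, cfc_id' ℝ B, Algebra.algebraMap_eq_smul_one]
  have e2 : cfc (fun t : ℝ => (l + m) + t) B = (l + m) • 1 + B := by
    rw [cfc_const_add (l + m) (fun t : ℝ => t) B, cfc_id' ℝ B, Algebra.algebraMap_eq_smul_one]
  have hVWcfc : (↑(V * W) : H →L[ℂ] H) = cfc (fun t : ℝ => (l + t) * ((l + m) + t)) B := by
    rw [Units.val_mul, hVs, hWs, ← e1, ← e2, ← cfc_mul _ _ B]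
  have hVWnonneg : (0 : H →L[ℂ] H) ≤ ↑(V * W) := by
    rw [hVWcfc]
    refine cfc_nonneg fun x hx => ?_
    have hx0 : 0 ≤ x := spectrum_nonneg_of_nonneg hB hx
    positivity
  have hVWle : (↑(V * W) : H →L[ℂ] H) ≤ (c * d) • 1 := by
    rw [hVWcfc]
    calc cfc (fun t : ℝ => (l + t) * ((l + m) + t)) B
        ≤ cfc (fun _ : ℝ => c * d) B := by
          refine cfc_mono fun x hx => ?_
          have hx0 : 0 ≤ x := spectrum_nonneg_of_nonneg hB hx
          have hx1 : x ≤ ‖B‖ := (Real.le_norm_self x).trans (spectrum.norm_le_norm_of_mem hx)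
          have hx2 : x ≤ ‖A‖ - m := hx1.trans hBnorm
          simp only [hc, hd]
          nlinarith
      _ = (c * d) • 1 := by rw [cfc_const (c * d) B, Algebra.algebraMap_eq_smul_one]
  -- the scalar unit
  have hcd : (0 : ℝ) < c * d := mul_pos hcpos hdpos
  have hcdu : IsUnit ((c * d) • (1 : H →L[ℂ] H)) := by
    have hmul : ((c * d) • (1 : H →L[ℂ] H)) * ((c * d)⁻¹ • (1 : H →L[ℂ] H)) = 1 := by
      rw [smul_mul_assoc, one_mul, smul_smul, mul_inv_cancel₀ hcd.ne', one_smul]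
    have hmul' : ((c * d)⁻¹ • (1 : H →L[ℂ] H)) * ((c * d) • (1 : H →L[ℂ] H)) = 1 := by
      rw [smul_mul_assoc, one_mul, smul_smul, inv_mul_cancel₀ hcd.ne', one_smul]
    exact ⟨⟨(c * d) • 1, (c * d)⁻¹ • 1, hmul, hmul'⟩, rfl⟩
  set K := hcdu.unit with hK
  have hKs : (↑K : H →L[ℂ] H) = (c * d) • 1 := hcdu.unit_spec
  have hKinv : (↑K⁻¹ : H →L[ℂ] H) = (c * d)⁻¹ • 1 := by
    refine Units.inv_eq_of_mul_eq_one_right ?_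
    rw [hKs, smul_mul_assoc, one_mul, smul_smul, mul_inv_cancel₀ hcd.ne', one_smul]
  -- inverse comparison for the product
  have hinvVW : (↑K⁻¹ : H →L[ℂ] H) ≤ ↑(V * W)⁻¹ := by
    refine CStarAlgebra.inv_le_inv hVWnonneg ?_
    rw [hKs]; exact hVWle
  -- inverse comparison : U⁻¹ ≤ W⁻¹
  have hWU : (↑W : H →L[ℂ] H) ≤ ↑U := by
    rw [hWs, hUs, add_smul]
    have h1 : m • (1 : H →L[ℂ] H) + B ≤ A := hBmA
    calc l • (1 : H →L[ℂ] H) + m • 1 + B = l • 1 + (m • 1 + B) := by abel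
      _ ≤ l • 1 + A := add_le_add le_rfl h1
  have hWnonneg : (0 : H →L[ℂ] H) ≤ ↑W := by
    rw [hWs]
    exact add_nonneg (smul_one_nonneg _ (by positivity)) hB
  have hinvUW : (↑U⁻¹ : H →L[ℂ] H) ≤ ↑W⁻¹ := CStarAlgebra.inv_le_inv hWnonneg hWU
  -- resolvent identity : V⁻¹ - W⁻¹ = m • (W⁻¹ * V⁻¹)
  have hres : (↑V⁻¹ : H →L[ℂ] H) - ↑W⁻¹ = m • ((↑W⁻¹ : H →L[ℂ] H) * ↑V⁻¹) := by
    have h1 : (↑W : H →L[ℂ] H) - ↑V = m • 1 := by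
      rw [hWs, hVs, add_smul]; abel
    have h2 : (↑W⁻¹ : H →L[ℂ] H) * ((↑W : H →L[ℂ] H) - ↑V) * ↑V⁻¹ = ↑V⁻¹ - ↑W⁻¹ := by
      rw [mul_sub, sub_mul, Units.inv_mul, one_mul, mul_assoc, Units.mul_inv, mul_one]
    calc (↑V⁻¹ : H →L[ℂ] H) - ↑W⁻¹ = ↑W⁻¹ * ((↑W : H →L[ℂ] H) - ↑V) * ↑V⁻¹ := h2.symm
      _ = ↑W⁻¹ * (m • (1 : H →L[ℂ] H)) * ↑V⁻¹ := by rw [h1]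
      _ = m • ((↑W⁻¹ : H →L[ℂ] H) * ↑V⁻¹) := by
          rw [mul_smul_comm, mul_one, smul_mul_assoc]
  -- identities for the main expression
  have hRu : Ring.inverse (l • (1 : H →L[ℂ] H) + A) = ↑U⁻¹ := by
    rw [← hUs, Ring.inverse_unit]
  have hRv : Ring.inverse (l • (1 : H →L[ℂ] H) + B) = ↑V⁻¹ := by
    rw [← hVs, Ring.inverse_unit]
  have idA : A * (↑U⁻¹ : H →L[ℂ] H) = 1 - l • ↑U⁻¹ := by
    have h1 : A = (↑U : H →L[ℂ] H) - l • 1 := by rw [hUs]; abel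
    calc A * (↑U⁻¹ : H →L[ℂ] H) = ((↑U : H →L[ℂ] H) - l • 1) * ↑U⁻¹ := by rw [← h1]
      _ = (↑U : H →L[ℂ] H) * ↑U⁻¹ - l • ((1 : H →L[ℂ] H) * ↑U⁻¹) := by
          rw [sub_mul, smul_mul_assoc]
      _ = 1 - l • ↑U⁻¹ := by rw [Units.mul_inv, one_mul]
  have idB : B * (↑V⁻¹ : H →L[ℂ] H) = 1 - l • ↑V⁻¹ := by
    have h1 : B = (↑V : H →L[ℂ] H) - l • 1 := by rw [hVs]; abel
    calc B * (↑V⁻¹ : H →L[ℂ] H) = ((↑V : H →L[ℂ] H) - l • 1) * ↑V⁻¹ := by rw [← h1]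
      _ = (↑V : H →L[ℂ] H) * ↑V⁻¹ - l • ((1 : H →L[ℂ] H) * ↑V⁻¹) := by
          rw [sub_mul, smul_mul_assoc]
      _ = 1 - l • ↑V⁻¹ := by rw [Units.mul_inv, one_mul]
  rw [hRu, hRv, idA, idB]
  have hgoal : (1 : H →L[ℂ] H) - l • ↑U⁻¹ - (1 - l • ↑V⁻¹) = l • ((↑V⁻¹ : H →L[ℂ] H) - ↑U⁻¹) := by
    rw [smul_sub]; abel
  rw [hgoal]
  -- the final chain
  have step1 : (l * m / (c * d)) • (1 : H →L[ℂ] H) = l • (m • ((c * d)⁻¹ • 1)) := by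
    rw [div_eq_mul_inv, mul_assoc, mul_smul, mul_smul]
  calc (l * m / (c * d)) • (1 : H →L[ℂ] H)
      = l • (m • ((c * d)⁻¹ • 1)) := step1
    _ ≤ l • (m • (↑(V * W)⁻¹ : H →L[ℂ] H)) := by
        refine smul_mono l hl.le _ _ (smul_mono m hm.le _ _ ?_)
        rw [← hKinv]; exact hinvVW
    _ = l • (m • ((↑W⁻¹ : H →L[ℂ] H) * ↑V⁻¹)) := by rw [mul_inv_rev, Units.val_mul]
    _ = l • ((↑V⁻¹ : H →L[ℂ] H) - ↑W⁻¹) := by rw [← hres]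
    _ ≤ l • ((↑V⁻¹ : H →L[ℂ] H) - ↑U⁻¹) := by
        refine smul_mono l hl.le _ _ ?_
        exact sub_le_sub_left hinvUW _
end

section
/- Let 0 < r < 1 and let a > b > 0 be real numbers. Then ∫₀^∞ λ^r / ((λ + a)(λ + b)) dλ = (π / ((a - b)·sin(rπ)))·(a^r - b^r). -/
open MeasureTheory Real

open Set intervalIntegral

lemma beta_aux {r : ℝ} (hr0 : 0 < r) (hr1 : r < 1) :
    ∫ t in (0:ℝ)..1, t ^ r * (1 - t) ^ (-r) = r * (π / Real.sin (π * r)) := by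
  have key := Complex.Gamma_mul_Gamma_eq_betaIntegral
    (s := ((r:ℂ) + 1)) (t := (1 - (r:ℂ))) (by simp; linarith) (by simp; linarith)
  have h2 : (r:ℂ) + 1 + (1 - r) = 2 := by ring
  rw [h2] at key
  have hG2 : Complex.Gamma 2 = 1 := by
    simpa using Complex.Gamma_nat_eq_factorial 2
  rw [hG2, one_mul] at key
  have hbeta : Complex.betaIntegral ((r:ℂ) + 1) (1 - r) =
      ((∫ t in (0:ℝ)..1, t ^ r * (1 - t) ^ (-r) : ℝ) : ℂ) := by
    rw [Complex.betaIntegral, ← intervalIntegral.integral_ofReal]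
    refine intervalIntegral.integral_congr fun x hx => ?_
    rw [uIcc_of_le zero_le_one] at hx
    obtain ⟨hx0, hx1⟩ := hx
    have h1x : (0:ℝ) ≤ 1 - x := by linarith
    push_cast
    rw [Complex.ofReal_cpow hx0, Complex.ofReal_cpow h1x]
    push_cast
    ring_nf
  rw [hbeta] at key
  have hcast : ((r:ℂ) + 1) = ((r + 1 : ℝ) : ℂ) := by push_cast; ring
  have hcast2 : (1 - (r:ℂ)) = ((1 - r : ℝ) : ℂ) := by push_cast; ring
  rw [hcast, hcast2, Complex.Gamma_ofReal, Complex.Gamma_ofReal,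
    ← Complex.ofReal_mul] at key
  have key' : Real.Gamma (r + 1) * Real.Gamma (1 - r)
      = ∫ t in (0:ℝ)..1, t ^ r * (1 - t) ^ (-r) := by exact_mod_cast key
  rw [← key', Real.Gamma_add_one hr0.ne', mul_assoc,
    Real.Gamma_mul_Gamma_one_sub r]

lemma J_aux {r : ℝ} (hr0 : 0 < r) (hr1 : r < 1) {c : ℝ} (hc : 0 < c) :
    ∫ x in Ioi (0:ℝ), x ^ r / (x + c) ^ 2 = π / Real.sin (π * r) * (r * c ^ (r - 1)) := by
  set f : ℝ → ℝ := fun t => c * t / (1 - t) with hf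
  set f' : ℝ → ℝ := fun t => c / (1 - t) ^ 2 with hf'
  set g : ℝ → ℝ := fun x => x ^ r / (x + c) ^ 2 with hg
  have hderiv : ∀ t ∈ Ioo (0:ℝ) 1, HasDerivWithinAt f (f' t) (Ioo 0 1) t := by
    intro t ht
    have h1t : (1:ℝ) - t ≠ 0 := by have := ht.2; intro h; linarith
    have H := (((hasDerivAt_id t).const_mul c).div
      ((hasDerivAt_const t 1).sub (hasDerivAt_id t)) h1t)
    simp only [id_eq] at H
    have heq : (c * 1 * (1 - t) - c * t * (0 - 1)) / (1 - t) ^ 2 = f' t := by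
      rw [hf']; field_simp; ring
    simp only [Pi.sub_apply, id_eq] at H
    rw [heq] at H
    exact H.hasDerivWithinAt
  have hinj : InjOn f (Ioo 0 1) := by
    intro t1 h1 t2 h2 heq
    have h11 : (1:ℝ) - t1 ≠ 0 := by have := h1.2; intro h; linarith
    have h12 : (1:ℝ) - t2 ≠ 0 := by have := h2.2; intro h; linarith
    rw [hf] at heq
    field_simp at heq
    nlinarith [heq, hc]
  have himg : f '' Ioo 0 1 = Ioi 0 := by
    ext y
    constructor
    · rintro ⟨t, ht, rfl⟩
      have : 0 < 1 - t := by have := ht.2; linarith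
      exact div_pos (mul_pos hc ht.1) this
    · intro hy
      have hy' : (0:ℝ) < y := hy
      refine ⟨y / (y + c), ⟨div_pos hy' (by linarith), ?_⟩, ?_⟩
      · rw [div_lt_one (by linarith)]; linarith
      · rw [hf]
        have hyc : y + c ≠ 0 := by positivity
        field_simp
        simp [hc.ne']
  have key := integral_image_eq_integral_abs_deriv_smul measurableSet_Ioo hderiv hinj g
  rw [himg] at key
  have congr1 : ∫ t in Ioo (0:ℝ) 1, |f' t| • g (f t)
      = ∫ t in Ioo (0:ℝ) 1, c ^ (r - 1) * (t ^ r * (1 - t) ^ (-r)) := by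
    refine setIntegral_congr_fun measurableSet_Ioo fun t ht => ?_
    have ht0 : 0 < t := ht.1
    have h1t : (0:ℝ) < 1 - t := by have := ht.2; linarith
    have hfc : f t + c = c / (1 - t) := by rw [hf]; field_simp; ring
    have habs : |f' t| = c / (1 - t) ^ 2 := by
      rw [hf', abs_of_pos (by positivity)]
    rw [smul_eq_mul, habs, hg]
    simp only []
    rw [hfc, hf]
    have hrw : (c * t / (1 - t)) ^ r = c ^ r * t ^ r * ((1 - t) ^ r)⁻¹ := by
      rw [div_rpow (by positivity) h1t.le, mul_rpow hc.le ht0.le, div_eq_mul_inv]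
    rw [hrw, Real.rpow_neg h1t.le, Real.rpow_sub hc, Real.rpow_one]
    have hcr : (0:ℝ) < c ^ r := Real.rpow_pos_of_pos hc r
    have h1tr : (0:ℝ) < (1 - t) ^ r := Real.rpow_pos_of_pos h1t r
    field_simp
  rw [key, congr1, ← integral_Ioc_eq_integral_Ioo,
    ← intervalIntegral.integral_of_le zero_le_one,
    intervalIntegral.integral_const_mul, beta_aux hr0 hr1]
  ring

/-- For `0 < r < 1` and reals `a > b > 0`,
`∫₀^∞ λ^r / ((λ + a)(λ + b)) dλ = (π / ((a - b)·sin(rπ)))·(a^r - b^r)`. -/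
theorem integral_rpow_div_mul_linear
    (r : ℝ) (hr0 : 0 < r) (hr1 : r < 1) (a b : ℝ) (hb : 0 < b) (hab : b < a) :
    ∫ l in Set.Ioi (0 : ℝ), l ^ r / ((l + a) * (l + b)) =
      (π / ((a - b) * Real.sin (r * π))) * (a ^ r - b ^ r) := by
  have ha : 0 < a := hb.trans hab
  have hab' : (0:ℝ) < a - b := by linarith
  set h : ℝ → ℝ := fun x => x ^ r / ((x + a) * (x + b)) with hh
  set F : ℝ → ℝ → ℝ := fun x c => x ^ r / (x + c) ^ 2 with hF
  -- inner integral identity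
  have h_inner : ∀ x ∈ Ioi (0:ℝ), (∫ c in Ioc b a, F x c) = (a - b) * h x := by
    intro x hx
    have hx0 : (0:ℝ) < x := hx
    have hxa : (0:ℝ) < x + a := by linarith
    have hxb : (0:ℝ) < x + b := by linarith
    have hFc : ∀ c : ℝ, F x c = x ^ r * (c + x) ^ (-2 : ℤ) := by
      intro c
      show x ^ r / (x + c) ^ 2 = _
      rw [add_comm x c, zpow_neg, div_eq_mul_inv]
      congr 1
    rw [← intervalIntegral.integral_of_le hab.le]
    calc ∫ c in b..a, F x c = ∫ c in b..a, x ^ r * (c + x) ^ (-2 : ℤ) := by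
          simp_rw [hFc]
      _ = x ^ r * ∫ c in b..a, (c + x) ^ (-2 : ℤ) :=
          intervalIntegral.integral_const_mul _ _
      _ = x ^ r * ∫ c in (b+x)..(a+x), c ^ (-2 : ℤ) := by
          rw [intervalIntegral.integral_comp_add_right (fun c => c ^ (-2:ℤ)) x]
      _ = (a - b) * h x := by
          rw [integral_zpow]
          · rw [hh]
            have h1 : (-2 : ℤ) + 1 = -1 := by norm_num
            rw [h1]
            simp only [zpow_neg, zpow_one]
            field_simp
            ring
          · right
            constructor
            · norm_num
            · rw [Set.uIcc_of_le (by linarith)]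
              intro hmem
              have := hmem.1
              linarith
  -- integrability of h on Ioi 0
  have h_int : IntegrableOn h (Ioi 0) := by
    have hsplit : Ioi (0:ℝ) = Ioc 0 1 ∪ Ioi 1 := by
      rw [Set.Ioc_union_Ioi_eq_Ioi zero_le_one]
    rw [hsplit]
    apply IntegrableOn.union
    · apply IntegrableOn.mono_set _ Set.Ioc_subset_Icc_self
      apply ContinuousOn.integrableOn_compact isCompact_Icc
      apply ContinuousOn.div
      · exact continuousOn_id.rpow_const fun x _ => Or.inr hr0.le
      · fun_prop
      · intro x hx
        have : 0 < x + a := by nlinarith [hx.1]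
        have : 0 < x + b := by nlinarith [hx.1]
        positivity
    · have hcomp : IntegrableOn (fun x : ℝ => x ^ (r - 2)) (Ioi 1) :=
        integrableOn_Ioi_rpow_of_lt (by linarith) one_pos
      apply hcomp.integrable.mono
      · apply (Measurable.aestronglyMeasurable ?_).restrict
        apply Measurable.div
        · fun_prop
        · fun_prop
      · filter_upwards [ae_restrict_mem measurableSet_Ioi] with x hx
        have hx1 : (1:ℝ) < x := hx
        have hx0 : (0:ℝ) < x := by linarith
        have hxa : (0:ℝ) < x + a := by linarith
        have hxb : (0:ℝ) < x + b := by linarith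
        rw [Real.norm_eq_abs, Real.norm_eq_abs, hh,
          abs_of_nonneg (by positivity), abs_of_nonneg (Real.rpow_nonneg hx0.le _)]
        rw [Real.rpow_sub hx0, div_le_iff₀ (by positivity), div_mul_eq_mul_div,
          le_div_iff₀ (by positivity),
          show (2:ℝ) = ((2:ℕ):ℝ) by norm_num, Real.rpow_natCast]
        calc x ^ r * x ^ 2 = x ^ r * (x * x) := by ring
          _ ≤ x ^ r * ((x + a) * (x + b)) := by
              apply mul_le_mul_of_nonneg_left _ (Real.rpow_nonneg hx0.le _)
              apply mul_le_mul (by linarith) (by linarith) hx0.le hxa.le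
  have hF_meas : AEStronglyMeasurable (Function.uncurry F)
      ((volume.restrict (Ioi 0)).prod (volume.restrict (Ioc b a))) := by
    apply Measurable.aestronglyMeasurable
    apply Measurable.div
    · fun_prop
    · fun_prop
  have hF_int : Integrable (Function.uncurry F)
      ((volume.restrict (Ioi 0)).prod (volume.restrict (Ioc b a))) := by
    rw [integrable_prod_iff hF_meas]
    constructor
    · filter_upwards [ae_restrict_mem measurableSet_Ioi] with x hx
      have hx0 : (0:ℝ) < x := hx
      have : IntegrableOn (fun c => F x c) (Ioc b a) := by
        apply IntegrableOn.mono_set _ Set.Ioc_subset_Icc_self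
        apply ContinuousOn.integrableOn_compact isCompact_Icc
        apply ContinuousOn.div continuousOn_const (by fun_prop)
        intro c hc
        have : (0:ℝ) < x + c := by have := hc.1; linarith
        positivity
      exact this
    · apply (h_int.const_mul (a - b)).congr
      filter_upwards [ae_restrict_mem measurableSet_Ioi] with x hx
      have hx0 : (0:ℝ) < x := hx
      have : ∫ c in Ioc b a, ‖F x c‖ = ∫ c in Ioc b a, F x c := by
        refine setIntegral_congr_fun measurableSet_Ioc fun c hc => ?_
        have hc0 : (0:ℝ) < x + c := by have := hc.1; linarith
        refine norm_of_nonneg ?_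
        show (0:ℝ) ≤ x ^ r / (x + c) ^ 2
        positivity
      simp only [Function.uncurry_apply_pair]
      rw [this, h_inner x hx]
  have swap := MeasureTheory.integral_integral_swap hF_int
  have step1 : ∫ x in Ioi (0:ℝ), ∫ c in Ioc b a, F x c
      = (a - b) * ∫ x in Ioi (0:ℝ), h x := by
    rw [← MeasureTheory.integral_const_mul]
    exact setIntegral_congr_fun measurableSet_Ioi h_inner
  have step2 : ∫ c in Ioc b a, ∫ x in Ioi (0:ℝ), F x c
      = π / Real.sin (π * r) * (a ^ r - b ^ r) := by
    have : ∀ c ∈ Ioc b a, (∫ x in Ioi (0:ℝ), F x c)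
        = π / Real.sin (π * r) * (r * c ^ (r - 1)) := by
      intro c hc
      exact J_aux hr0 hr1 (hb.trans hc.1)
    rw [setIntegral_congr_fun measurableSet_Ioc this]
    simp_rw [← mul_assoc]
    rw [MeasureTheory.integral_const_mul, ← intervalIntegral.integral_of_le hab.le,
      integral_rpow (Or.inl (by linarith))]
    have h1 : r - 1 + 1 = r := by ring
    rw [h1]
    have hrne : r ≠ 0 := hr0.ne'
    field_simp
  have hsin : (0:ℝ) < Real.sin (π * r) := by
    apply Real.sin_pos_of_pos_of_lt_pi
    · positivity
    · nlinarith [Real.pi_pos]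
  have final : (a - b) * ∫ x in Ioi (0:ℝ), h x
      = π / Real.sin (π * r) * (a ^ r - b ^ r) := by
    rw [← step1, swap, step2]
  have := final
  rw [show Real.sin (r * π) = Real.sin (π * r) by rw [mul_comm]]
  have goal : ∫ x in Ioi (0:ℝ), h x
      = π / ((a - b) * Real.sin (π * r)) * (a ^ r - b ^ r) := by
    field_simp at this ⊢
    linarith [this]
  exact goal
end

section
/- Let A and B be self-adjoint bounded linear operators on a complex Hilbert space H whose spectra are contained in (-1, 1), let m > 0 satisfy A - B ≥ m·I, and let 0 < λ < 1. Then I - λA and I - λB are positive and invertible, and (1/λ)·((I - λA)⁻¹ - (I - λB)⁻¹) ≥ (m / ((‖I - λB‖ - λm)·‖I - λB‖))·I. -/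
section Aux

variable {A : Type*} [CStarAlgebra A] [PartialOrder A] [StarOrderedRing A]

lemma aux_one_nonneg : (0 : A) ≤ 1 := by
  simpa using star_mul_self_nonneg (1 : A)

lemma aux_smul_nonneg_s12 {r : ℝ} (hr : 0 ≤ r) {a : A} (ha : 0 ≤ a) : 0 ≤ r • a := by
  have h := star_left_conjugate_nonneg ha (algebraMap ℝ A (Real.sqrt r))
  have hs : star (algebraMap ℝ A (Real.sqrt r)) = algebraMap ℝ A (Real.sqrt r) := by
    rw [← algebraMap_star_comm, star_trivial]
  rw [hs, mul_assoc, ← Algebra.commutes, ← Algebra.smul_def, ← Algebra.smul_def,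
    smul_smul, Real.mul_self_sqrt hr] at h
  exact h

lemma aux_smul_le_s12 {r : ℝ} (hr : 0 ≤ r) {a b : A} (hab : a ≤ b) : r • a ≤ r • b := by
  rw [← sub_nonneg, ← smul_sub]
  exact aux_smul_nonneg_s12 hr (sub_nonneg.mpr hab)

lemma aux_one_smul_mono {r r' : ℝ} (h : r ≤ r') : r • (1 : A) ≤ r' • (1 : A) := by
  rw [← sub_nonneg, ← sub_smul]
  exact aux_smul_nonneg_s12 (by linarith) aux_one_nonneg

lemma aux_sq {x : A} {c : ℝ} (hc : 0 ≤ c) (hx : c • (1 : A) ≤ x) : c • x ≤ x * x := by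
  have hx0 : 0 ≤ x := le_trans (aux_smul_nonneg_s12 hc aux_one_nonneg) hx
  set s := CFC.sqrt x with hs
  have hs0 : 0 ≤ s := CFC.sqrt_nonneg x
  have hss : s * s = x := CFC.sqrt_mul_sqrt_self x hx0
  have hsa : star s = s := (IsSelfAdjoint.of_nonneg hs0).star_eq
  have h := star_left_conjugate_le_conjugate hx s
  rw [hsa] at h
  have e1 : s * (c • (1 : A)) * s = c • x := by
    rw [mul_smul_comm, mul_one, smul_mul_assoc, hss]
  have e2 : s * x * s = x * x := by
    rw [← hss]; noncomm_ring
  rwa [e1, e2] at h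

/-- The unit `r • 1` for `r ≠ 0`. -/
noncomputable def auxUnit (r : ℝ) (hr : r ≠ 0) : Aˣ where
  val := r • 1
  inv := r⁻¹ • 1
  val_inv := by rw [smul_mul_smul_comm, mul_one, mul_inv_cancel₀ hr, one_smul]
  inv_val := by rw [smul_mul_smul_comm, mul_one, inv_mul_cancel₀ hr, one_smul]

lemma aux_isUnit_smul_one {r : ℝ} (hr : r ≠ 0) : IsUnit (r • (1 : A)) :=
  ⟨auxUnit r hr, rfl⟩

lemma aux_inv_le {x : Aˣ} {r : ℝ} (hr : 0 < r) (hx0 : 0 ≤ (x : A))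
    (hxr : (x : A) ≤ r • 1) : r⁻¹ • (1 : A) ≤ ↑x⁻¹ :=
  CStarAlgebra.inv_le_inv (a := x) (b := auxUnit r hr.ne') hx0 hxr

end Aux

set_option maxHeartbeats 1000000 in
set_option synthInstance.maxHeartbeats 1000000 in
/-- Let `A, B` be self-adjoint operators on a complex Hilbert space with spectra in `(-1, 1)`,
let `m > 0` satisfy `m·I ≤ A - B`, and let `0 < λ < 1`. Then `I - λA` and `I - λB` are positive
and invertible and
`(1/λ)·((I - λA)⁻¹ - (I - λB)⁻¹) ≥ (m / ((‖I - λB‖ - λm)·‖I - λB‖))·I`. -/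
theorem resolvent_sub_ge_of_pos_lambda
    {H : Type*} [NormedAddCommGroup H] [InnerProductSpace ℂ H] [CompleteSpace H]
    (A B : H →L[ℂ] H) (hA : IsSelfAdjoint A) (hB : IsSelfAdjoint B)
    (hsA : spectrum ℝ A ⊆ Set.Ioo (-1) 1) (hsB : spectrum ℝ B ⊆ Set.Ioo (-1) 1)
    (m : ℝ) (hm : 0 < m) (h : m • (1 : H →L[ℂ] H) ≤ A - B)
    (l : ℝ) (hl0 : 0 < l) (hl1 : l < 1) :
    0 ≤ 1 - l • A ∧ IsUnit (1 - l • A) ∧ 0 ≤ 1 - l • B ∧ IsUnit (1 - l • B) ∧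
      (m / ((‖(1 : H →L[ℂ] H) - l • B‖ - l * m) * ‖(1 : H →L[ℂ] H) - l • B‖)) •
          (1 : H →L[ℂ] H) ≤
        (1 / l) • (Ring.inverse (1 - l • A) - Ring.inverse (1 - l • B)) := by
  by_cases htriv : Subsingleton (H →L[ℂ] H)
  · exact ⟨le_of_eq (Subsingleton.elim _ _), isUnit_of_subsingleton _,
      le_of_eq (Subsingleton.elim _ _), isUnit_of_subsingleton _,
      le_of_eq (Subsingleton.elim _ _)⟩
  haveI : Nontrivial (H →L[ℂ] H) := not_subsingleton_iff_nontrivial.mp htriv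
  set S : H →L[ℂ] H := 1 - l • A with hSdef
  set T : H →L[ℂ] H := 1 - l • B with hTdef
  -- `A ≤ 1` and `B ≤ 1`
  have norm_lt_one : ∀ C : H →L[ℂ] H, IsSelfAdjoint C → spectrum ℝ C ⊆ Set.Ioo (-1) 1 →
      ‖C‖ < 1 := by
    intro C hC hsC
    rcases CStarAlgebra.norm_or_neg_norm_mem_spectrum hC with hmem | hmem
    · exact (hsC hmem).2
    · have := (hsC hmem).1; linarith
  have le_one : ∀ C : H →L[ℂ] H, IsSelfAdjoint C → spectrum ℝ C ⊆ Set.Ioo (-1) 1 →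
      C ≤ 1 := by
    intro C hC hsC
    calc C ≤ algebraMap ℝ _ ‖C‖ := hC.le_algebraMap_norm_self
      _ = ‖C‖ • 1 := Algebra.algebraMap_eq_smul_one _
      _ ≤ (1 : ℝ) • 1 := aux_one_smul_mono (norm_lt_one C hC hsC).le
      _ = 1 := one_smul _ _
  -- positivity of `S` and `T`
  have key_low : ∀ C : H →L[ℂ] H, C ≤ 1 → (1 - l) • (1 : H →L[ℂ] H) ≤ 1 - l • C := by
    intro C hC
    rw [← sub_nonneg]
    have e : (1 : H →L[ℂ] H) - l • C - (1 - l) • 1 = l • (1 - C) := by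
      rw [sub_smul, one_smul, smul_sub]; abel
    rw [e]
    exact aux_smul_nonneg_s12 hl0.le (sub_nonneg.mpr hC)
  have hS_low : (1 - l) • (1 : H →L[ℂ] H) ≤ S := key_low A (le_one A hA hsA)
  have hT_low : (1 - l) • (1 : H →L[ℂ] H) ≤ T := key_low B (le_one B hB hsB)
  have h1l : (0:ℝ) < 1 - l := by linarith
  have hS0 : (0 : H →L[ℂ] H) ≤ S :=
    le_trans (aux_smul_nonneg_s12 h1l.le aux_one_nonneg) hS_low
  have hT0 : (0 : H →L[ℂ] H) ≤ T :=
    le_trans (aux_smul_nonneg_s12 h1l.le aux_one_nonneg) hT_low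
  have hSu : IsUnit S :=
    CStarAlgebra.isUnit_of_le _ hS_low
      ⟨aux_smul_nonneg_s12 h1l.le aux_one_nonneg, aux_isUnit_smul_one h1l.ne'⟩
  have hTu : IsUnit T :=
    CStarAlgebra.isUnit_of_le _ hT_low
      ⟨aux_smul_nonneg_s12 h1l.le aux_one_nonneg, aux_isUnit_smul_one h1l.ne'⟩
  refine ⟨hS0, hSu, hT0, hTu, ?_⟩
  -- the difference `D`
  set D : H →L[ℂ] H := T - S with hDdef
  have hD_low : (l * m) • (1 : H →L[ℂ] H) ≤ D := by
    have h' := aux_smul_le_s12 hl0.le h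
    rw [smul_smul] at h'
    have e : l • (A - B) = D := by
      rw [hDdef, hSdef, hTdef, smul_sub]; abel
    rwa [e] at h'
  have hlm : (0:ℝ) < l * m := mul_pos hl0 hm
  have hD0 : (0 : H →L[ℂ] H) ≤ D :=
    le_trans (aux_smul_nonneg_s12 hlm.le aux_one_nonneg) hD_low
  have hT_sa : IsSelfAdjoint T := IsSelfAdjoint.of_nonneg hT0
  have hD_st : star D = D := (IsSelfAdjoint.of_nonneg hD0).star_eq
  -- bounds involving `‖T‖`
  have hT_le : T ≤ ‖T‖ • 1 := by
    have h' := hT_sa.le_algebraMap_norm_self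
    rwa [Algebra.algebraMap_eq_smul_one] at h'
  have hT_norm_low : 1 - l + l * m ≤ ‖T‖ := by
    have hsum : (1 - l + l * m) • (1 : H →L[ℂ] H) ≤ T := by
      have h' := add_le_add hS_low hD_low
      rwa [← add_smul, show S + D = T by rw [hDdef]; abel] at h'
    have hnn : (0 : H →L[ℂ] H) ≤ (1 - l + l*m) • 1 :=
      aux_smul_nonneg_s12 (by linarith) aux_one_nonneg
    have h' := CStarAlgebra.norm_le_norm_of_nonneg_of_le hnn hsum
    rwa [norm_smul, norm_one, mul_one, Real.norm_eq_abs, abs_of_pos (by linarith)] at h'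
  have hn_pos : (0:ℝ) < ‖T‖ := by linarith
  have hc0_pos : (0:ℝ) < ‖T‖ - l * m := by linarith
  set c₀ : ℝ := ‖T‖ - l * m with hc₀
  set n : ℝ := ‖T‖ with hn
  have hS_le : S ≤ c₀ • 1 := by
    have h1 : S + (l*m) • (1 : H →L[ℂ] H) ≤ T := by
      have h' := add_le_add_right hD_low S
      rwa [show S + D = T by rw [hDdef]; abel] at h'
    have h2 : S + (l*m) • (1 : H →L[ℂ] H) ≤ n • 1 := le_trans h1 hT_le
    have h3 := sub_le_sub_right h2 ((l*m) • (1 : H →L[ℂ] H))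
    rwa [add_sub_cancel_right, ← sub_smul, ← hc₀] at h3
  -- units and inverses
  obtain ⟨SU, hSU⟩ := hSu
  obtain ⟨TU, hTU⟩ := hTu
  set s : H →L[ℂ] H := ↑SU⁻¹ with hsdef
  set t : H →L[ℂ] H := ↑TU⁻¹ with htdef
  have hRingS : Ring.inverse S = s := by rw [← hSU, Ring.inverse_unit]
  have hRingT : Ring.inverse T = t := by rw [← hTU, Ring.inverse_unit]
  have hs_low : c₀⁻¹ • (1 : H →L[ℂ] H) ≤ s := by
    refine aux_inv_le hc0_pos ?_ ?_ <;> rw [hSU]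
    exacts [hS0, hS_le]
  have ht_low : n⁻¹ • (1 : H →L[ℂ] H) ≤ t := by
    refine aux_inv_le hn_pos ?_ ?_ <;> rw [hTU]
    exacts [hT0, hT_le]
  have hninv : (0:ℝ) < n⁻¹ := by positivity
  have hs0 : (0 : H →L[ℂ] H) ≤ s :=
    le_trans (aux_smul_nonneg_s12 (by positivity) aux_one_nonneg) hs_low
  have ht0 : (0 : H →L[ℂ] H) ≤ t :=
    le_trans (aux_smul_nonneg_s12 hninv.le aux_one_nonneg) ht_low
  have ht_sa : star t = t := (IsSelfAdjoint.of_nonneg ht0).star_eq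
  -- unit relations
  have hSs : S * s = 1 := by rw [← hSU]; exact SU.mul_inv
  have hsS : s * S = 1 := by rw [← hSU]; exact SU.inv_mul
  have hTt : T * t = 1 := by rw [← hTU]; exact TU.mul_inv
  have htT : t * T = 1 := by rw [← hTU]; exact TU.inv_mul
  -- resolvent identities
  have h1 : t * D * s = s - t := by
    rw [hDdef, mul_sub, sub_mul, htT, one_mul, mul_assoc, hSs, mul_one]
  have h2 : s * D * t = s - t := by
    rw [hDdef, mul_sub, sub_mul, mul_assoc s T t, hTt, mul_one, hsS, one_mul]
  have hs_decomp : s = t + s * D * t := by rw [h2]; abel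
  have key : s - t = t * D * t + t * D * s * D * t := by
    calc s - t = t * D * s := h1.symm
      _ = t * D * (t + s * D * t) := by rw [← hs_decomp]
      _ = t * D * t + t * D * s * D * t := by noncomm_ring
  -- lower bound for `t * D * t`
  have hDD : (l*m) • D ≤ D * D := aux_sq hlm.le hD_low
  have htt : n⁻¹ • t ≤ t * t := aux_sq hninv.le ht_low
  have hb3 : (l*m) • (t * t) ≤ t * D * t := by
    have h' := star_left_conjugate_le_conjugate hD_low t
    rwa [ht_sa, mul_smul_comm, mul_one, smul_mul_assoc] at h'
  have tdt_low : (l * m / (n*n)) • (1 : H →L[ℂ] H) ≤ t * D * t := by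
    have e1 : (l*m) • (n⁻¹ • (n⁻¹ • (1 : H →L[ℂ] H))) ≤ (l*m) • (n⁻¹ • t) :=
      aux_smul_le_s12 hlm.le (aux_smul_le_s12 hninv.le ht_low)
    have e2 : (l*m) • (n⁻¹ • t) ≤ (l*m) • (t * t) := aux_smul_le_s12 hlm.le htt
    have h' := le_trans e1 (le_trans e2 hb3)
    rwa [smul_smul, smul_smul, show l*m*n⁻¹*n⁻¹ = l*m/(n*n) by
      rw [mul_assoc, ← mul_inv, ← div_eq_mul_inv]] at h'
  -- lower bound for `t * D * s * D * t`
  have hb1 : c₀⁻¹ • (t * D * (D * t)) ≤ t * D * s * (D * t) := by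
    have h' := star_left_conjugate_le_conjugate hs_low (D * t)
    rwa [star_mul, ht_sa, hD_st, mul_smul_comm, mul_one, smul_mul_assoc,
      ← mul_assoc] at h'
  have hb2 : (l*m) • (t * D * t) ≤ t * D * (D * t) := by
    have h' := star_left_conjugate_le_conjugate hDD t
    rw [ht_sa, mul_smul_comm, smul_mul_assoc] at h'
    calc (l*m) • (t * D * t) ≤ t * (D * D) * t := h'
      _ = t * D * (D * t) := by noncomm_ring
  have sdsd_low : (l*m/c₀ * (l*m/(n*n))) • (1 : H →L[ℂ] H) ≤ t * D * s * D * t := by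
    have step1 : c₀⁻¹ • ((l*m) • (t*D*t)) ≤ c₀⁻¹ • (t * D * (D * t)) :=
      aux_smul_le_s12 (inv_nonneg.mpr hc0_pos.le) hb2
    have step2 : c₀⁻¹ • ((l*m) • (t*D*t)) ≤ t * D * s * D * t := by
      have e0 : t * D * s * (D * t) = t * D * s * D * t := by noncomm_ring
      rw [← e0]
      exact le_trans step1 hb1
    have step3 : c₀⁻¹ • ((l*m) • ((l*m/(n*n)) • (1 : H →L[ℂ] H))) ≤
        c₀⁻¹ • ((l*m) • (t*D*t)) :=
      aux_smul_le_s12 (inv_nonneg.mpr hc0_pos.le) (aux_smul_le_s12 hlm.le tdt_low)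
    have h' := le_trans step3 step2
    rwa [smul_smul, smul_smul,
      show c₀⁻¹*(l*m)*(l*m/(n*n)) = l*m/c₀*(l*m/(n*n)) by ring] at h'
  -- putting everything together
  have total : (l*m/(n*n) + l*m/c₀ * (l*m/(n*n))) • (1 : H →L[ℂ] H) ≤ s - t := by
    rw [key, add_smul]
    exact add_le_add tdt_low sdsd_low
  have hc : n = c₀ + l*m := by rw [hc₀]; ring
  have hclm : (0:ℝ) < c₀ + l*m := by linarith
  have hscal : l*m/(n*n) + l*m/c₀ * (l*m/(n*n)) = l * (m / (c₀ * n)) := by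
    rw [hc]
    field_simp
  rw [hRingS, hRingT]
  have total' : (l * (m / (c₀ * n))) • (1 : H →L[ℂ] H) ≤ s - t := by
    rw [← hscal]; exact total
  have final := aux_smul_le_s12 (by positivity : (0:ℝ) ≤ 1/l) total'
  rwa [smul_smul, show 1/l*(l*(m/(c₀*n))) = m/(c₀*n) by field_simp] at final
end

section
/- Let A and B be self-adjoint bounded linear operators on a complex Hilbert space H whose spectra are contained in (-1, 1), let m > 0 satisfy A - B ≥ m·I, and let -1 < λ < 0. Then I - λA and I - λB are positive and invertible, and (1/λ)·((I - λA)⁻¹ - (I - λB)⁻¹) ≥ (m / ((‖I - λA‖ + λm)·‖I - λA‖))·I. -/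
set_option maxHeartbeats 1000000
set_option synthInstance.maxHeartbeats 1000000

/-- Let `A, B` be self-adjoint operators on a complex Hilbert space with spectra in `(-1, 1)`,
let `m > 0` satisfy `A - B ≥ m·I`, and let `-1 < λ < 0`. Then `I - λA` and `I - λB` are positive
and invertible and
`(1/λ)·((I - λA)⁻¹ - (I - λB)⁻¹) ≥ (m / ((‖I - λA‖ + λm)·‖I - λA‖))·I`. -/
theorem resolvent_sub_ge_of_neg_lambda
    {H : Type*} [NormedAddCommGroup H] [InnerProductSpace ℂ H] [CompleteSpace H]
    (A B : H →L[ℂ] H) (hA : IsSelfAdjoint A) (hB : IsSelfAdjoint B)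
    (hsA : spectrum ℝ A ⊆ Set.Ioo (-1) 1) (hsB : spectrum ℝ B ⊆ Set.Ioo (-1) 1)
    (m : ℝ) (hm : 0 < m) (h : m • (1 : H →L[ℂ] H) ≤ A - B)
    (l : ℝ) (hl0 : -1 < l) (hl1 : l < 0) :
    0 ≤ 1 - l • A ∧ IsUnit (1 - l • A) ∧ 0 ≤ 1 - l • B ∧ IsUnit (1 - l • B) ∧
      (m / ((‖(1 : H →L[ℂ] H) - l • A‖ + l * m) * ‖(1 : H →L[ℂ] H) - l • A‖)) •
          (1 : H →L[ℂ] H) ≤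
        (1 / l) • (Ring.inverse (1 - l • A) - Ring.inverse (1 - l • B)) := by
  rcases subsingleton_or_nontrivial H with hsub | hnt
  · have : Subsingleton (H →L[ℂ] H) := ⟨fun f g => by ext x; exact Subsingleton.elim _ _⟩
    exact ⟨le_of_eq (Subsingleton.elim _ _), isUnit_of_subsingleton _,
      le_of_eq (Subsingleton.elim _ _), isUnit_of_subsingleton _,
      le_of_eq (Subsingleton.elim _ _)⟩
  set T : H →L[ℂ] H := 1 - l • A with hTdef
  set S : H →L[ℂ] H := 1 - l • B with hSdef
  have hlA : IsSelfAdjoint (l • A) := by rw [IsSelfAdjoint, star_smul, star_trivial, hA.star_eq]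
  have hlB : IsSelfAdjoint (l • B) := by rw [IsSelfAdjoint, star_smul, star_trivial, hB.star_eq]
  have hTsa : IsSelfAdjoint T := (IsSelfAdjoint.one (H →L[ℂ] H)).sub hlA
  have hSsa : IsSelfAdjoint S := (IsSelfAdjoint.one (H →L[ℂ] H)).sub hlB
  have hεpos : (0:ℝ) < 1 + l := by linarith
  -- lower bounds via cfc
  have hbound : ∀ (C : H →L[ℂ] H), IsSelfAdjoint C → spectrum ℝ C ⊆ Set.Ioo (-1) 1 →
      algebraMap ℝ (H →L[ℂ] H) (1 + l) ≤ 1 - l • C := by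
    intro C hC hsC
    have h1 : cfc (fun t : ℝ => 1 - l * t) C = 1 - l • C := by
      rw [cfc_sub (fun _ => (1:ℝ)) (fun t => l * t) C (by fun_prop) (by fun_prop),
        cfc_const_mul l (fun t => t) C (by fun_prop), cfc_const_one ℝ C, cfc_id' ℝ C]
    rw [← h1, ← cfc_const (1 + l) C hC]
    refine cfc_mono fun t ht => ?_
    obtain ⟨ht1, ht2⟩ := hsC ht
    nlinarith
  have hTlow : algebraMap ℝ (H →L[ℂ] H) (1 + l) ≤ T := hbound A hA hsA
  have hSlow : algebraMap ℝ (H →L[ℂ] H) (1 + l) ≤ S := hbound B hB hsB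
  have hone : (0:H →L[ℂ] H) ≤ 1 := by simpa using star_mul_self_nonneg (1 : H →L[ℂ] H)
  have halgnn : ∀ r : ℝ, 0 ≤ r → (0:H →L[ℂ] H) ≤ algebraMap ℝ (H →L[ℂ] H) r := by
    intro r hr
    rw [Algebra.algebraMap_eq_smul_one]
    simpa using smul_le_smul_of_nonneg_left hone hr
  have hT0 : (0:H →L[ℂ] H) ≤ T := (halgnn _ hεpos.le).trans hTlow
  have hS0 : (0:H →L[ℂ] H) ≤ S := (halgnn _ hεpos.le).trans hSlow
  have halgunit : ∀ r : ℝ, r ≠ 0 → IsUnit (algebraMap ℝ (H →L[ℂ] H) r) :=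
    fun r hr => (isUnit_iff_ne_zero.mpr hr).map (algebraMap ℝ (H →L[ℂ] H))
  have hTu : IsUnit T :=
    CStarAlgebra.isUnit_of_le _ hTlow ((halgunit _ hεpos.ne').isStrictlyPositive (halgnn _ hεpos.le))
  have hSu : IsUnit S :=
    CStarAlgebra.isUnit_of_le _ hSlow ((halgunit _ hεpos.ne').isStrictlyPositive (halgnn _ hεpos.le))
  set μ : ℝ := -(l * m) with hμdef
  have hμpos : 0 < μ := by nlinarith
  -- S + μ ≤ T
  have hST : S + algebraMap ℝ (H →L[ℂ] H) μ ≤ T := by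
    have h2 : (-l) • (m • (1:H →L[ℂ] H)) ≤ (-l) • (A - B) :=
      smul_le_smul_of_nonneg_left h (by linarith)
    have e1 : (-l) • (m • (1:H →L[ℂ] H)) = algebraMap ℝ (H →L[ℂ] H) μ := by
      rw [smul_smul, Algebra.algebraMap_eq_smul_one, hμdef]; ring_nf
    have e2 : (-l) • (A - B) = T - S := by
      rw [hTdef, hSdef]; module
    rw [e1, e2] at h2
    exact add_le_of_le_sub_left h2
  set nT : ℝ := ‖T‖ with hnTdef
  have hTn : T ≤ algebraMap ℝ (H →L[ℂ] H) nT := hTsa.le_algebraMap_norm_self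
  have hεμ : algebraMap ℝ (H →L[ℂ] H) ((1 + l) + μ) ≤ T := by
    rw [map_add]
    exact le_trans (add_le_add_left hSlow _) hST
  have hsc : (1 + l) + μ ≤ nT := by
    have h3 := CStarAlgebra.norm_le_norm_of_nonneg_of_le (halgnn _ (by positivity)) hεμ
    calc (1 + l) + μ = ‖algebraMap ℝ (H →L[ℂ] H) ((1 + l) + μ)‖ := by
          rw [Algebra.algebraMap_eq_smul_one, norm_smul, norm_one, mul_one,
            Real.norm_eq_abs, abs_of_nonneg (by positivity)]
      _ ≤ ‖T‖ := h3
  have hnTμpos : 0 < nT - μ := by linarith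
  have hnTpos : 0 < nT := by linarith
  set c : ℝ := μ / (nT - μ) with hcdef
  have hc0 : 0 ≤ c := by positivity
  have h1c : (0:ℝ) < 1 + c := by linarith
  have hSup : S ≤ algebraMap ℝ (H →L[ℂ] H) (nT - μ) := by
    have h4 : S ≤ T - algebraMap ℝ (H →L[ℂ] H) μ := le_sub_iff_add_le.mpr hST
    refine h4.trans ?_
    rw [map_sub]
    exact sub_le_sub_right hTn _
  have key : (1 + c) • S ≤ T := by
    have h5 : c • S ≤ c • algebraMap ℝ (H →L[ℂ] H) (nT - μ) :=
      smul_le_smul_of_nonneg_left hSup hc0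
    have e3 : c • algebraMap ℝ (H →L[ℂ] H) (nT - μ) = algebraMap ℝ (H →L[ℂ] H) μ := by
      rw [Algebra.algebraMap_eq_smul_one, Algebra.algebraMap_eq_smul_one, smul_smul,
        hcdef, div_mul_cancel₀ _ hnTμpos.ne']
    have e4 : (1 + c) • S = S + c • S := by rw [add_smul, one_smul]
    rw [e4]
    calc S + c • S ≤ S + algebraMap ℝ (H →L[ℂ] H) μ := add_le_add_right (e3 ▸ h5) S
      _ ≤ T := hST
  obtain ⟨uT, huT⟩ := id hTu
  obtain ⟨uS, huS⟩ := id hSu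
  have h1cu : IsUnit ((1 + c) • S) := by
    rw [Algebra.smul_def]
    exact (halgunit _ h1c.ne').mul hSu
  obtain ⟨uCS, huCS⟩ := id h1cu
  have h0CS : (0 : H →L[ℂ] H) ≤ uCS := by
    rw [huCS]
    simpa using smul_le_smul_of_nonneg_left hS0 h1c.le
  have hinv1 : (↑uT⁻¹ : H →L[ℂ] H) ≤ ↑uCS⁻¹ :=
    CStarAlgebra.inv_le_inv h0CS (by rw [huCS, huT]; exact key)
  have huCSinv : (↑uCS⁻¹ : H →L[ℂ] H) = (1 + c)⁻¹ • ↑uS⁻¹ := by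
    apply Units.inv_eq_of_mul_eq_one_left
    rw [huCS, ← huS, smul_mul_smul_comm, inv_mul_cancel₀ h1c.ne', Units.inv_mul, one_smul]
  obtain ⟨uK, huK⟩ := id (halgunit _ hnTμpos.ne')
  have huKinv : (↑uK⁻¹ : H →L[ℂ] H) = algebraMap ℝ (H →L[ℂ] H) (nT - μ)⁻¹ := by
    apply Units.inv_eq_of_mul_eq_one_left
    rw [huK, ← map_mul, inv_mul_cancel₀ hnTμpos.ne', map_one]
  have h2 : algebraMap ℝ (H →L[ℂ] H) (nT - μ)⁻¹ ≤ ↑uS⁻¹ := by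
    rw [← huKinv]
    exact CStarAlgebra.inv_le_inv (by rw [huS]; exact hS0) (by rw [huS, huK]; exact hSup)
  have eqT : Ring.inverse T = (↑uT⁻¹ : H →L[ℂ] H) := by rw [← huT, Ring.inverse_unit]
  have eqS : Ring.inverse S = (↑uS⁻¹ : H →L[ℂ] H) := by rw [← huS, Ring.inverse_unit]
  refine ⟨hT0, hTu, hS0, hSu, ?_⟩
  rw [eqT, eqS]
  set iT := (↑uT⁻¹ : H →L[ℂ] H) with hiT
  set iS := (↑uS⁻¹ : H →L[ℂ] H) with hiS
  have hq0 : (0:ℝ) ≤ 1 - (1 + c)⁻¹ := by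
    have e5 : (1:ℝ) - (1 + c)⁻¹ = c / (1 + c) := by field_simp; ring
    rw [e5]; positivity
  have step1 : (1 - (1 + c)⁻¹) • iS ≤ iS - iT := by
    have h7 := sub_le_sub_left (huCSinv ▸ hinv1) iS
    calc (1 - (1 + c)⁻¹) • iS = iS - (1 + c)⁻¹ • iS := by rw [sub_smul, one_smul]
      _ ≤ iS - iT := h7
  have step2 : algebraMap ℝ (H →L[ℂ] H) ((1 - (1 + c)⁻¹) * (nT - μ)⁻¹) ≤ iS - iT := by
    refine le_trans ?_ step1
    rw [Algebra.algebraMap_eq_smul_one, ← smul_smul]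
    refine smul_le_smul_of_nonneg_left ?_ hq0
    rw [← Algebra.algebraMap_eq_smul_one]
    exact h2
  have hlinv : (0:ℝ) ≤ -(1/l) := by
    have : (1:ℝ)/l < 0 := one_div_neg.mpr hl1
    linarith
  have hfin : algebraMap ℝ (H →L[ℂ] H) ((-(1/l)) * ((1 - (1 + c)⁻¹) * (nT - μ)⁻¹)) ≤
      (1/l) • (iT - iS) := by
    have h6 := smul_le_smul_of_nonneg_left step2 hlinv
    have e7 : (-(1/l)) • (iS - iT) = (1/l) • (iT - iS) := by module
    have e8 : (-(1/l)) • algebraMap ℝ (H →L[ℂ] H) ((1 - (1 + c)⁻¹) * (nT - μ)⁻¹) =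
        algebraMap ℝ (H →L[ℂ] H) ((-(1/l)) * ((1 - (1 + c)⁻¹) * (nT - μ)⁻¹)) := by
      rw [Algebra.algebraMap_eq_smul_one, Algebra.algebraMap_eq_smul_one, smul_smul]
    rw [e7, e8] at h6
    exact h6
  have escal : m / ((nT + l * m) * nT) = (-(1/l)) * ((1 - (1 + c)⁻¹) * (nT - μ)⁻¹) := by
    have hnTμpos' : (0:ℝ) < nT - -(l*m) := hnTμpos
    rw [hcdef, hμdef]
    have h1' : nT + l * m ≠ 0 := by nlinarith
    have h3 : (1:ℝ) + (-(l*m)) / (nT - -(l*m)) = nT / (nT - -(l*m)) := by field_simp; ring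
    rw [h3, inv_div]
    have h5 : (1:ℝ) - (nT - -(l*m))/nT = -(l*m)/nT := by field_simp; ring
    rw [h5]
    have hpos : 0 < nT * (nT + l * m) := by nlinarith
    have hD : l * nT ^ 2 + l ^ 2 * m * nT ≠ 0 := by
      intro h0; exact (mul_neg_of_neg_of_pos hl1 hpos).ne (by linear_combination h0)
    field_simp
    rw [div_eq_div_iff (by rw [mul_comm m l]; exact h1') (mul_ne_zero hl1.ne (by rw [mul_comm m l]; exact hnTμpos'.ne'))]
    ring
  rw [← Algebra.algebraMap_eq_smul_one, escal]
  exact hfin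
end

section
/- Let A and B be bounded linear operators on a complex Hilbert space H with B positive and A - B positive and invertible, and let 0 < r ≤ 1. Then A^r - B^r is positive and invertible. -/
open scoped NNReal ENNReal
open Filter

lemma my_spectralRadius_mul_le {𝕜 B : Type*} [NormedField 𝕜] [NormedRing B] [NormedAlgebra 𝕜 B]
    (a b : B) : spectralRadius 𝕜 (a * b) ≤ spectralRadius 𝕜 (b * a) := by
  rw [spectralRadius, spectralRadius]
  refine iSup₂_le fun k hk => ?_
  rcases eq_or_ne k 0 with rfl | hk0
  · simp
  · have hmem : k ∈ spectrum 𝕜 (a * b) \ {0} := ⟨hk, hk0⟩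
    rw [spectrum.nonzero_mul_comm] at hmem
    exact le_iSup₂ (f := fun k (_ : k ∈ spectrum 𝕜 (b * a)) => (‖k‖₊ : ℝ≥0∞)) k hmem.1

lemma my_spectralRadius_mul_comm {𝕜 B : Type*} [NormedField 𝕜] [NormedRing B] [NormedAlgebra 𝕜 B]
    (a b : B) : spectralRadius 𝕜 (a * b) = spectralRadius 𝕜 (b * a) :=
  le_antisymm (my_spectralRadius_mul_le a b) (my_spectralRadius_mul_le b a)

section CStar

variable {A : Type*} [CStarAlgebra A] [PartialOrder A] [StarOrderedRing A]

open CFC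

lemma my_isUnit_rpow {a : A} (hau : IsUnit a) (ha : 0 ≤ a) (s : ℝ) : IsUnit (a ^ s) := by
  have h0 := hau.isStrictlyPositive ha
  exact ⟨⟨a ^ s, a ^ (-s), rpow_mul_rpow_neg s h0, rpow_neg_mul_rpow s h0⟩, rfl⟩

lemma my_exp_eq {b : A} (hb : 0 ≤ b) {s : ℝ} (hs : s ≠ 0) :
    (b ^ s) ^ (-(1/2) : ℝ) = b ^ (-(s/2)) ∨ ¬ IsUnit b := by
  by_cases hbu : IsUnit b
  · left
    rw [rpow_rpow b s _ hs (hbu.isStrictlyPositive hb)]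
    have : s * -(1/2) = -(s/2) := by ring
    rw [this]
  · right; exact hbu

lemma my_norm_le_one {a b : A} (ha : 0 ≤ a) (hb : 0 ≤ b)
    (hau : IsUnit a) (hbu : IsUnit b) {s : ℝ} (hs : 0 ≤ s) (h : a ^ s ≤ b ^ s) :
    ‖a ^ (s/2) * b ^ (-(s/2))‖ ≤ 1 := by
  rcases subsingleton_or_nontrivial A with hA | hA
  · simp [Subsingleton.elim (a ^ (s/2) * b ^ (-(s/2))) 0]
  rcases eq_or_lt_of_le hs with hs0 | hs'
  · rw [← hs0, zero_div, neg_zero, rpow_zero a ha, rpow_zero b hb, mul_one, norm_one]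
  · have ha0 := hau
    have hb0 := hbu
    have h1 := (le_iff_norm_sqrt_mul_rpow (a ^ s) (b ^ s) rpow_nonneg ((my_isUnit_rpow hbu hb s).isStrictlyPositive rpow_nonneg)).mp h
    have e1 : sqrt (a ^ s) = a ^ (s/2) := sqrt_rpow ha0 hs'.ne'
    have e2 := (my_exp_eq hb hs'.ne').resolve_right (not_not.mpr hbu)
    rwa [e1, e2] at h1

lemma my_le_of_norm_le_one {a b : A} (ha : 0 ≤ a) (hb : 0 ≤ b)
    (hau : IsUnit a) (hbu : IsUnit b) {s : ℝ} (hs : 0 < s)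
    (h : ‖a ^ (s/2) * b ^ (-(s/2))‖ ≤ 1) : a ^ s ≤ b ^ s := by
  have ha0 := hau
  refine (le_iff_norm_sqrt_mul_rpow (a ^ s) (b ^ s) rpow_nonneg ((my_isUnit_rpow hbu hb s).isStrictlyPositive rpow_nonneg)).mpr ?_
  have e1 : sqrt (a ^ s) = a ^ (s/2) := sqrt_rpow ha0 hs.ne'
  have e2 := (my_exp_eq hb hs.ne').resolve_right (not_not.mpr hbu)
  rwa [e1, e2]

end CStar

section CStar
variable {A : Type*} [CStarAlgebra A] [PartialOrder A] [StarOrderedRing A]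
open CFC

lemma my_midpoint {a b : A} (ha : 0 ≤ a) (hb : 0 ≤ b) (hau : IsUnit a) (hbu : IsUnit b)
    {s t : ℝ} (hs : 0 ≤ s) (ht : 0 ≤ t) (hsle : a ^ s ≤ b ^ s) (htle : a ^ t ≤ b ^ t) :
    a ^ ((s + t)/2) ≤ b ^ ((s + t)/2) := by
  rcases subsingleton_or_nontrivial A with hA | hA
  · exact le_of_eq (Subsingleton.elim _ _)
  set m : ℝ := (s + t)/2 with hm
  have hm0 : 0 ≤ m := by positivity
  rcases eq_or_lt_of_le hm0 with hm' | hm'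
  · rw [← hm', rpow_zero a ha, rpow_zero b hb]
  have ha0 := hau
  have hb0 := hbu
  refine my_le_of_norm_le_one ha hb hau hbu hm' ?_
  have key : ‖b ^ (-(m/2)) * a ^ m * b ^ (-(m/2))‖₊ ≤ 1 := by
    have sa1 : IsSelfAdjoint (b ^ (-(m/2)) : A) := .of_nonneg rpow_nonneg
    have hX : (0:A) ≤ b ^ (-(m/2)) * a ^ m * b ^ (-(m/2)) :=
      sa1.conjugate_nonneg rpow_nonneg
    have hXsa : IsSelfAdjoint (b ^ (-(m/2)) * a ^ m * b ^ (-(m/2)) : A) := .of_nonneg hX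
    have h1 : (‖b ^ (-(m/2)) * a ^ m * b ^ (-(m/2))‖₊ : ℝ≥0∞)
        = spectralRadius ℂ (b ^ (-(m/2)) * a ^ m * b ^ (-(m/2))) :=
      hXsa.spectralRadius_eq_nnnorm.symm
    have e0a : a ^ m = a ^ (s/2) * a ^ (t/2) := by
      rw [← rpow_add ha0]
      congr 1
      rw [hm]; ring
    have e0b : (b ^ (-(m/2)) * b ^ (-(m/2)) : A) = b ^ (-m) := by
      rw [← rpow_add hb0]
      congr 1; ring
    have e0c : (b ^ (-m) : A) = b ^ (-(t/2)) * b ^ (-(s/2)) := by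
      rw [← rpow_add hb0]
      congr 1
      rw [hm]; ring
    have h2 : spectralRadius ℂ (b ^ (-(m/2)) * a ^ m * b ^ (-(m/2)) : A)
        = spectralRadius ℂ (a ^ (t/2) * b ^ (-(t/2)) * (b ^ (-(s/2)) * a ^ (s/2)) : A) := by
      rw [mul_assoc]
      rw [my_spectralRadius_mul_comm (b ^ (-(m/2))) (a ^ m * b ^ (-(m/2)))]
      have e1 : a ^ m * b ^ (-(m/2)) * b ^ (-(m/2)) = a ^ (s/2) * (a ^ (t/2) * b ^ (-m)) := by
        rw [mul_assoc (a ^ m), e0b, e0a, mul_assoc]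
      rw [e1, my_spectralRadius_mul_comm (a ^ (s/2)) (a ^ (t/2) * b ^ (-m))]
      have e2 : a ^ (t/2) * b ^ (-m) * a ^ (s/2)
          = a ^ (t/2) * b ^ (-(t/2)) * (b ^ (-(s/2)) * a ^ (s/2)) := by
        rw [e0c]
        simp only [mul_assoc]
      rw [e2]
    have h3 : spectralRadius ℂ (a ^ (t/2) * b ^ (-(t/2)) * (b ^ (-(s/2)) * a ^ (s/2)) : A)
        ≤ (‖(a ^ (t/2) * b ^ (-(t/2)) : A)‖₊ : ℝ≥0∞) * ‖(b ^ (-(s/2)) * a ^ (s/2) : A)‖₊ := by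
      refine (spectrum.spectralRadius_le_nnnorm (𝕜 := ℂ)
        (a := (a ^ (t/2) * b ^ (-(t/2)) * (b ^ (-(s/2)) * a ^ (s/2)) : A))).trans ?_
      exact_mod_cast ENNReal.coe_le_coe.mpr (nnnorm_mul_le _ _)
    have hbt : ‖(a ^ (t/2) * b ^ (-(t/2)) : A)‖₊ ≤ 1 := my_norm_le_one ha hb hau hbu ht htle
    have hbs : ‖(b ^ (-(s/2)) * a ^ (s/2) : A)‖₊ ≤ 1 := by
      have hst : (b ^ (-(s/2)) * a ^ (s/2) : A) = star (a ^ (s/2) * b ^ (-(s/2)) : A) := by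
        rw [star_mul, (IsSelfAdjoint.of_nonneg (rpow_nonneg (a := a))).star_eq,
          (IsSelfAdjoint.of_nonneg (rpow_nonneg (a := b))).star_eq]
      rw [hst, nnnorm_star]
      exact my_norm_le_one ha hb hau hbu hs hsle
    have hchain : (‖b ^ (-(m/2)) * a ^ m * b ^ (-(m/2))‖₊ : ℝ≥0∞) ≤ 1 := by
      rw [h1, h2]
      refine h3.trans ?_
      calc (‖(a ^ (t/2) * b ^ (-(t/2)) : A)‖₊ : ℝ≥0∞) * ‖(b ^ (-(s/2)) * a ^ (s/2) : A)‖₊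
          ≤ 1 * 1 := by gcongr <;> exact_mod_cast ‹_›
        _ = 1 := by norm_num
    exact_mod_cast hchain
  have hsq : ‖(a ^ (m/2) * b ^ (-(m/2)) : A)‖₊ * ‖(a ^ (m/2) * b ^ (-(m/2)) : A)‖₊ ≤ 1 := by
    rw [← CStarRing.nnnorm_star_mul_self]
    have hst : star (a ^ (m/2) * b ^ (-(m/2)) : A) * (a ^ (m/2) * b ^ (-(m/2)))
        = b ^ (-(m/2)) * a ^ m * b ^ (-(m/2)) := by
      rw [star_mul, (IsSelfAdjoint.of_nonneg (rpow_nonneg (a := a))).star_eq,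
        (IsSelfAdjoint.of_nonneg (rpow_nonneg (a := b))).star_eq]
      have h12 : a ^ (m/2) * (a ^ (m/2) : A) = a ^ m := by
        rw [← rpow_add ha0]
        congr 1; ring
      rw [mul_assoc, ← mul_assoc (a ^ (m/2)), h12, ← mul_assoc]
    rw [hst]
    exact key
  have hfin : ‖(a ^ (m/2) * b ^ (-(m/2)) : A)‖₊ ≤ 1 := by
    rw [← sq] at hsq
    exact (pow_le_one_iff_of_nonneg zero_le two_ne_zero).mp hsq
  exact_mod_cast hfin


lemma my_rpow_eq_exp {a : A} (ha : 0 ≤ a) (hau : IsUnit a) (r : ℝ) :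
    a ^ r = NormedSpace.exp (r • CFC.log a) := by
  have hpos : ∀ x ∈ spectrum ℝ a, 0 < x := fun x hx =>
    lt_of_le_of_ne (spectrum_nonneg_of_nonneg ha hx)
      (Ne.symm (by rintro rfl; exact spectrum.zero_notMem ℝ hau hx))
  have hlogc : ContinuousOn (fun x : ℝ => r * Real.log x) (spectrum ℝ a) :=
    continuousOn_const.mul (Real.continuousOn_log.mono fun x hx =>
      Set.mem_compl_singleton_iff.mpr (hpos x hx).ne')
  have h1 : r • CFC.log a = cfc (fun x : ℝ => r * Real.log x) a := by
    have hlc : ContinuousOn Real.log (spectrum ℝ a) :=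
      Real.continuousOn_log.mono fun x hx => Set.mem_compl_singleton_iff.mpr (hpos x hx).ne'
    rw [CFC.log, ← cfc_smul r Real.log a hlc]
    simp [smul_eq_mul]
  have h2 : NormedSpace.exp (r • CFC.log a) = cfc (fun x : ℝ => Real.exp (r * Real.log x)) a := by
    rw [h1, ← real_exp_eq_normedSpace_exp (cfc_predicate _ a)]
    exact (cfc_comp' Real.exp (fun x : ℝ => r * Real.log x) a
      Real.continuous_exp.continuousOn hlogc (IsSelfAdjoint.of_nonneg ha)).symm
  rw [h2, rpow_def]; refine (cfc_nnreal_eq_real (fun x : ℝ≥0 => x ^ r) a ha).trans ?_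
  refine cfc_congr fun x hx => ?_
  have hx0 : 0 < x := hpos x hx
  rw [NNReal.coe_rpow, Real.coe_toNNReal x hx0.le, Real.rpow_def_of_pos hx0, mul_comm]

lemma my_continuous_rpow {a : A} (ha : 0 ≤ a) (hau : IsUnit a) :
    Continuous fun r : ℝ => a ^ r := by
  have : (fun r : ℝ => a ^ r) = fun r : ℝ => NormedSpace.exp (r • CFC.log a) :=
    funext (my_rpow_eq_exp ha hau)
  rw [this]
  exact (continuous_iff_continuousAt.2 fun x => (NormedSpace.exp_analytic (𝕂 := ℝ) x).continuousAt).comp (continuous_id.smul continuous_const)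


/-- Löwner–Heinz for invertible `a`. -/
lemma my_loewner_heinz {a b : A} (ha : 0 ≤ a) (hau : IsUnit a) (hab : a ≤ b)
    {r : ℝ} (hr0 : 0 ≤ r) (hr1 : r ≤ 1) : a ^ r ≤ b ^ r := by
  have hb : 0 ≤ b := ha.trans hab
  have hbu : IsUnit b := CStarAlgebra.isUnit_of_le a hab (hau.isStrictlyPositive ha)
  set S : Set ℝ := {x | a ^ x ≤ b ^ x} with hS
  have hclosed : IsClosed S := by
    have hSeq : S = (fun x : ℝ => b ^ x - a ^ x) ⁻¹' {y : A | 0 ≤ y} := by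
      ext x
      simp [hS, sub_nonneg]
    rw [hSeq]
    exact CStarAlgebra.isClosed_nonneg.preimage
      ((my_continuous_rpow hb hbu).sub (my_continuous_rpow ha hau))
  have hdyadic : ∀ n : ℕ, ∀ k : ℕ, k ≤ 2^n → ((k : ℝ) / 2^n) ∈ S := by
    intro n
    induction n with
    | zero =>
      intro k hk
      interval_cases k
      · have : ((0:ℕ) : ℝ) / 2^0 = (0:ℝ) := by norm_num
        rw [this]
        show a ^ (0:ℝ) ≤ b ^ (0:ℝ)
        rw [rpow_zero a ha, rpow_zero b hb]
      · have : ((1:ℕ) : ℝ) / 2^0 = (1:ℝ) := by norm_num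
        rw [this]
        show a ^ (1:ℝ) ≤ b ^ (1:ℝ)
        rwa [rpow_one a ha, rpow_one b hb]
    | succ n ih =>
      intro k hk
      by_cases hk2 : k ≤ 2^n
      · have h1 : ((k:ℝ)/2^n) ∈ S := ih k hk2
        have h2 : ((0:ℝ)) ∈ S := by
          have := ih 0 (Nat.zero_le _)
          simpa using this
        have hmid := my_midpoint ha hb hau hbu (by positivity) le_rfl h1 h2
        have heq : (((k:ℝ)/2^n) + 0)/2 = (k:ℝ)/2^(n+1) := by
          rw [pow_succ]
          ring
        rw [heq] at hmid
        exact hmid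
      · push_neg at hk2
        have hk2' : 2^n ≤ k := hk2.le
        have h1 : (((2^n : ℕ):ℝ)/2^n) ∈ S := ih (2^n) le_rfl
        have h2 : (((k - 2^n : ℕ):ℝ)/2^n) ∈ S := by
          refine ih (k - 2^n) ?_
          have := hk
          rw [pow_succ] at this
          omega
        have hmid := my_midpoint ha hb hau hbu (by positivity) (by positivity) h1 h2
        have heq : ((((2^n : ℕ):ℝ)/2^n) + (((k - 2^n : ℕ):ℝ)/2^n))/2 = (k:ℝ)/2^(n+1) := by
          have hcast : ((k - 2^n : ℕ):ℝ) = (k:ℝ) - 2^n := by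
            push_cast [Nat.cast_sub hk2']
            ring
          rw [hcast, pow_succ]
          field_simp
          push_cast; ring
        rw [heq] at hmid
        exact hmid
  -- approximate r by dyadics
  have hrS : r ∈ S := by
    set u : ℕ → ℝ := fun n => ((Nat.floor (r * 2^n) : ℕ) : ℝ) / 2^n with hu
    have humem : ∀ n, u n ∈ S := by
      intro n
      refine hdyadic n _ ?_
      have : r * 2^n ≤ ((2^n : ℕ) : ℝ) := by
        push_cast
        nlinarith [pow_pos (show (0:ℝ) < 2 by norm_num) n]
      calc Nat.floor (r * 2^n) ≤ Nat.floor (((2^n : ℕ):ℝ)) := Nat.floor_mono this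
        _ = 2^n := Nat.floor_natCast _
    have hle : ∀ n, u n ≤ r := by
      intro n
      have h2n : (0:ℝ) < 2^n := by positivity
      rw [hu]
      rw [div_le_iff₀ h2n]
      exact Nat.floor_le (by positivity)
    have hge : ∀ n, r - (1/2)^n ≤ u n := by
      intro n
      have h2n : (0:ℝ) < 2^n := by positivity
      have := Nat.lt_floor_add_one (r * 2^n)
      show r - (1/2)^n ≤ ((Nat.floor (r * 2^n) : ℕ) : ℝ) / 2^n
      rw [le_div_iff₀ h2n]
      have h12 : (1/2:ℝ)^n * 2^n = 1 := by
        rw [← mul_pow]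
        norm_num
      nlinarith [this]
    have htend : Tendsto u atTop (nhds r) := by
      have hlow : Tendsto (fun n : ℕ => r - (1/2)^n) atTop (nhds r) := by
        have : Tendsto (fun n : ℕ => ((1:ℝ)/2)^n) atTop (nhds 0) :=
          tendsto_pow_atTop_nhds_zero_of_lt_one (by norm_num) (by norm_num)
        simpa using (tendsto_const_nhds (x := r)).sub this
      exact tendsto_of_tendsto_of_tendsto_of_le_of_le hlow tendsto_const_nhds hge hle
    exact hclosed.mem_of_tendsto htend (Filter.Eventually.of_forall humem)
  exact hrS


end CStar


lemma my_scalar_antitone {ε r : ℝ} (hε : 0 < ε) (hr0 : 0 < r) (hr1 : r ≤ 1) :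
    AntitoneOn (fun x : ℝ => (x + ε) ^ r - x ^ r) (Set.Ici 0) := by
  have hderiv : ∀ x ∈ interior (Set.Ici (0:ℝ)),
      HasDerivAt (fun x : ℝ => (x + ε) ^ r - x ^ r)
        (r * (x + ε) ^ (r - 1) * 1 - r * x ^ (r - 1)) x := by
    intro x hx
    rw [interior_Ici, Set.mem_Ioi] at hx
    have h1 : HasDerivAt (fun x : ℝ => (x + ε) ^ r) (r * (x + ε) ^ (r - 1) * 1) x :=
      HasDerivAt.comp (h₂ := fun y : ℝ => y ^ r) x (Real.hasDerivAt_rpow_const (x := x + ε) (p := r)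
        (Or.inl (by positivity))) ((hasDerivAt_id x).add_const ε)
    have h2 : HasDerivAt (fun x : ℝ => x ^ r) (r * x ^ (r - 1)) x :=
      Real.hasDerivAt_rpow_const (Or.inl hx.ne')
    exact h1.sub h2
  have hcont : Continuous (fun x : ℝ => (x + ε) ^ r - x ^ r) := by
    have h0 : Continuous fun x : ℝ => x ^ r := by
      rw [continuous_iff_continuousAt]
      exact fun x => Real.continuousAt_rpow_const x r (Or.inr hr0.le)
    exact (h0.comp (continuous_id.add continuous_const)).sub h0
  refine antitoneOn_of_deriv_nonpos (convex_Ici 0) hcont.continuousOn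
    (fun x hx => ((hderiv x hx).differentiableAt).differentiableWithinAt) ?_
  intro x hx
  rw [(hderiv x hx).deriv]
  rw [interior_Ici, Set.mem_Ioi] at hx
  have hle : (x + ε) ^ (r - 1) ≤ x ^ (r - 1) :=
    Real.rpow_le_rpow_of_nonpos hx (by linarith) (by linarith)
  nlinarith [hle, hr0.le]


section CStar
variable {A : Type*} [CStarAlgebra A] [PartialOrder A] [StarOrderedRing A]
open CFC

lemma my_gap {b : A} (hb : 0 ≤ b) {ε : ℝ≥0} (hε : 0 < ε) {r : ℝ} (hr0 : 0 < r) (hr1 : r ≤ 1) :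
    b ^ r + algebraMap ℝ≥0 A ((‖b‖₊ + ε) ^ r - ‖b‖₊ ^ r) ≤ (b + algebraMap ℝ≥0 A ε) ^ r := by
  rcases subsingleton_or_nontrivial A with hA | hA
  · exact le_of_eq (Subsingleton.elim _ _)
  set δ : ℝ≥0 := (‖b‖₊ + ε) ^ r - ‖b‖₊ ^ r with hδ
  have hcont : Continuous (fun x : ℝ≥0 => x ^ r) := NNReal.continuous_rpow_const hr0.le
  have E1 : b + algebraMap ℝ≥0 A ε = cfc (fun x : ℝ≥0 => x + ε) b := by
    have h := cfc_add_const ε (id : ℝ≥0 → ℝ≥0) b continuous_id.continuousOn hb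
    simp only [id_eq] at h
    rw [cfc_id ℝ≥0 b hb] at h
    exact h.symm
  have E2 : (b + algebraMap ℝ≥0 A ε) ^ r = cfc (fun x : ℝ≥0 => (x + ε) ^ r) b := by
    rw [E1, rpow_def]
    exact (cfc_comp' (fun x : ℝ≥0 => x ^ r) (fun x : ℝ≥0 => x + ε) b
      hcont.continuousOn (continuous_id.add continuous_const).continuousOn hb).symm
  have E3 : b ^ r + algebraMap ℝ≥0 A δ = cfc (fun x : ℝ≥0 => x ^ r + δ) b := by
    rw [cfc_add_const δ (fun x : ℝ≥0 => x ^ r) b hcont.continuousOn hb, rpow_def]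
  rw [E2, E3]
  refine cfc_mono (fun x hx => ?_) (hcont.add continuous_const).continuousOn
    (hcont.comp (continuous_id.add continuous_const)).continuousOn
  -- scalar inequality
  have hxM : x ≤ ‖b‖₊ := spectrum.le_nnnorm_of_mem hx
  have hmono : ‖b‖₊ ^ r ≤ (‖b‖₊ + ε) ^ r :=
    NNReal.rpow_le_rpow (le_add_of_nonneg_right zero_le) hr0.le
  rw [← NNReal.coe_le_coe]
  push_cast [NNReal.coe_sub hmono]
  have hkey := my_scalar_antitone (ε := (ε:ℝ)) (by exact_mod_cast hε) hr0 hr1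
    (Set.mem_Ici.mpr x.coe_nonneg) (Set.mem_Ici.mpr (‖b‖₊).coe_nonneg) (by exact_mod_cast hxM)
  simp only [coe_nnnorm] at hkey
  push_cast [coe_nnnorm] at hkey ⊢
  have hδ' : (δ : ℝ) = (‖b‖ + ε) ^ r - ‖b‖ ^ r := by
    rw [hδ, NNReal.coe_sub hmono]; push_cast [coe_nnnorm]; rfl
  linarith [hkey]


end CStar


/-- **Kwong-type corollary.** If `A > B ≥ 0` (i.e. `B` is positive and `A - B` is positive and
invertible) on a complex Hilbert space, then `A^r - B^r` is positive and invertible for every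
`0 < r ≤ 1`. -/

theorem rpow_sub_rpow_pos_invertible
    {H : Type*} [NormedAddCommGroup H] [InnerProductSpace ℂ H] [CompleteSpace H]
    (A B : H →L[ℂ] H) (hB : 0 ≤ B) (hAB : 0 ≤ A - B) (hABu : IsUnit (A - B))
    (r : ℝ) (hr0 : 0 < r) (hr1 : r ≤ 1) :
    0 ≤ CFC.rpow A r - CFC.rpow B r ∧ IsUnit (CFC.rpow A r - CFC.rpow B r) := by
  rcases subsingleton_or_nontrivial (H →L[ℂ] H) with htriv | hnt
  · exact ⟨le_of_eq (Subsingleton.elim _ _), isUnit_of_subsingleton _⟩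
  have hBA : B ≤ A := sub_nonneg.mp hAB
  have hA : (0 : H →L[ℂ] H) ≤ A := hB.trans hBA
  -- find ε with ε • 1 ≤ A - B
  have hABsa : IsSelfAdjoint (A - B) := .of_nonneg hAB
  have hpos : ∀ x ∈ spectrum ℝ (A - B), 0 < x := fun x hx =>
    lt_of_le_of_ne (spectrum_nonneg_of_nonneg hAB hx)
      (Ne.symm (by rintro rfl; exact spectrum.zero_notMem ℝ hABu hx))
  obtain ⟨ε, hε, hεle⟩ := (CFC.exists_pos_algebraMap_le_iff (a := A - B) hABsa).mpr hpos
  set ε' : ℝ≥0 := ⟨ε, hε.le⟩ with hε'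
  have hε'pos : 0 < ε' := hε
  have hmapeq : algebraMap ℝ≥0 (H →L[ℂ] H) ε' = algebraMap ℝ (H →L[ℂ] H) ε := by
    rw [Algebra.algebraMap_eq_smul_one, Algebra.algebraMap_eq_smul_one, NNReal.smul_def,
      hε']
    rfl
  have he0 : (0 : H →L[ℂ] H) ≤ algebraMap ℝ≥0 (H →L[ℂ] H) ε' := by
    rw [← cfc_const ε' B hB]
    exact cfc_predicate _ B
  have hBe : B + algebraMap ℝ≥0 (H →L[ℂ] H) ε' ≤ A := by
    rw [hmapeq, ← sub_nonneg]
    have habel : A - (B + algebraMap ℝ (H →L[ℂ] H) ε)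
        = (A - B) - algebraMap ℝ (H →L[ℂ] H) ε := by
      abel
    rw [habel, sub_nonneg]
    exact hεle
  have hBe0 : (0 : H →L[ℂ] H) ≤ B + algebraMap ℝ≥0 (H →L[ℂ] H) ε' := add_nonneg hB he0
  have heu : IsUnit (algebraMap ℝ≥0 (H →L[ℂ] H) ε') :=
    (isUnit_iff_ne_zero.mpr hε'pos.ne').map (algebraMap ℝ≥0 (H →L[ℂ] H))
  have hBeu : IsUnit (B + algebraMap ℝ≥0 (H →L[ℂ] H) ε') :=
    CStarAlgebra.isUnit_of_le _ (le_add_of_nonneg_left hB) (heu.isStrictlyPositive he0)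
  -- Löwner–Heinz
  have hLH : (B + algebraMap ℝ≥0 (H →L[ℂ] H) ε') ^ r ≤ A ^ r :=
    my_loewner_heinz hBe0 hBeu hBe hr0.le hr1
  -- gap
  set δ : ℝ≥0 := (‖B‖₊ + ε') ^ r - ‖B‖₊ ^ r with hδ
  have hδpos : 0 < δ := by
    rw [hδ]
    exact tsub_pos_of_lt (NNReal.rpow_lt_rpow (lt_add_of_pos_right _ hε'pos) hr0)
  have hgap : B ^ r + algebraMap ℝ≥0 (H →L[ℂ] H) δ
      ≤ (B + algebraMap ℝ≥0 (H →L[ℂ] H) ε') ^ r := my_gap hB hε'pos hr0 hr1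
  have hd0 : (0 : H →L[ℂ] H) ≤ algebraMap ℝ≥0 (H →L[ℂ] H) δ := by
    rw [← cfc_const δ B hB]
    exact cfc_predicate _ B
  have hdu : IsUnit (algebraMap ℝ≥0 (H →L[ℂ] H) δ) :=
    (isUnit_iff_ne_zero.mpr hδpos.ne').map (algebraMap ℝ≥0 (H →L[ℂ] H))
  have hdle : algebraMap ℝ≥0 (H →L[ℂ] H) δ ≤ A ^ r - B ^ r := by
    rw [← sub_nonneg]
    have habel : A ^ r - B ^ r - algebraMap ℝ≥0 (H →L[ℂ] H) δ
        = A ^ r - (B ^ r + algebraMap ℝ≥0 (H →L[ℂ] H) δ) := by abel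
    rw [habel, sub_nonneg]
    exact (hgap.trans hLH)
  have h1 : (0 : H →L[ℂ] H) ≤ A ^ r - B ^ r := hd0.trans hdle
  have h2 : IsUnit (A ^ r - B ^ r) := CStarAlgebra.isUnit_of_le _ hdle (hdu.isStrictlyPositive hd0)
  exact ⟨h1, h2⟩
end
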